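/- arXiv:2204.07364 — 10 statements merged into one kernel-verified Lean document; each statement's English description precedes it below -/
import Mathlib

section
/- Let N > 1 be an integer such that the polynomial X^2 - 3X + 1 has a root ε modulo N (i.e. ε^2 ≡ 3ε - 1 mod N) with ε coprime to N. Then (1/N) · Σ_{d=1}^{N-1} d · ((-1 - dε) mod N) = (N-1)^2 / 4, where (a mod N) denotes the unique representative in [0, N). -/
private lemma emod_mul_emod (N x y : ℤ) : (x % N * y) % N = (x * y) % N := by
  conv_rhs => rw [Int.mul_emod]
  rw [Int.mul_emod (x % N) y, Int.emod_emod_of_dvd _ dvd_rfl]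

private lemma mem_s {N : ℤ} (hN : 1 < N) {a : ℤ} (hcop : IsCoprime N a)
    {x : ℤ} (hx : x ∈ Finset.Icc (1:ℤ) (N-1)) : (x * a) % N ∈ Finset.Icc (1:ℤ) (N-1) := by
  simp only [Finset.mem_Icc] at hx ⊢
  have h0 : 0 ≤ (x*a) % N := Int.emod_nonneg _ (by omega)
  have h1 : (x*a) % N < N := Int.emod_lt_of_pos _ (by omega)
  have hne : (x*a) % N ≠ 0 := by
    intro h
    have h2 : N ∣ x * a := Int.dvd_of_emod_eq_zero h
    have h3 : N ∣ x := hcop.dvd_of_dvd_mul_right h2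
    have := Int.le_of_dvd (by omega) h3
    omega
  omega

private lemma reindex {N a b : ℤ} (hN : 1 < N) (j : ℤ) (hab : a * b = 1 + N * j)
    (F : ℤ → ℤ) :
    ∑ d ∈ Finset.Icc (1:ℤ) (N-1), F ((d * a) % N)
      = ∑ d ∈ Finset.Icc (1:ℤ) (N-1), F d := by
  have hcopa : IsCoprime N a := ⟨-j, b, by linear_combination hab⟩
  have hcopb : IsCoprime N b := ⟨-j, a, by linear_combination hab⟩
  refine Finset.sum_nbij' (i := fun d => (d * a) % N) (j := fun c => (c * b) % N)
    (fun x hx => mem_s hN hcopa hx) (fun x hx => mem_s hN hcopb hx) ?_ ?_ (fun x _ => rfl)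
  · intro x hx
    simp only [Finset.mem_Icc] at hx
    show ((x * a) % N * b) % N = x
    rw [emod_mul_emod]
    have h : x * a * b = x + N * (x * j) := by linear_combination x * hab
    rw [h, Int.add_mul_emod_self_left, Int.emod_eq_of_lt (by omega) (by omega)]
  · intro x hx
    simp only [Finset.mem_Icc] at hx
    show ((x * b) % N * a) % N = x
    rw [emod_mul_emod]
    have h : x * b * a = x + N * (x * j) := by linear_combination x * hab
    rw [h, Int.add_mul_emod_self_left, Int.emod_eq_of_lt (by omega) (by omega)]

private lemma gauss1_nat (j : ℕ) :
    2 * ∑ d ∈ Finset.Icc (1:ℤ) (j:ℤ), d = (j:ℤ) * ((j:ℤ)+1) := by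
  induction j with
  | zero => simp
  | succ j ih =>
    have hins : Finset.Icc (1:ℤ) ((j:ℤ)+1) = insert ((j:ℤ)+1) (Finset.Icc (1:ℤ) (j:ℤ)) := by
      ext x; simp only [Finset.mem_Icc, Finset.mem_insert]; omega
    have hnot : ((j:ℤ)+1) ∉ Finset.Icc (1:ℤ) (j:ℤ) := by
      simp only [Finset.mem_Icc]; omega
    push_cast
    rw [hins, Finset.sum_insert hnot]
    linarith

private lemma gauss2_nat (j : ℕ) :
    6 * ∑ d ∈ Finset.Icc (1:ℤ) (j:ℤ), d^2 = (j:ℤ) * ((j:ℤ)+1) * (2*(j:ℤ)+1) := by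
  induction j with
  | zero => simp
  | succ j ih =>
    have hins : Finset.Icc (1:ℤ) ((j:ℤ)+1) = insert ((j:ℤ)+1) (Finset.Icc (1:ℤ) (j:ℤ)) := by
      ext x; simp only [Finset.mem_Icc, Finset.mem_insert]; omega
    have hnot : ((j:ℤ)+1) ∉ Finset.Icc (1:ℤ) (j:ℤ) := by
      simp only [Finset.mem_Icc]; omega
    push_cast
    rw [hins, Finset.sum_insert hnot]
    nlinarith [ih]

private lemma gauss1 (n : ℤ) (h : 1 ≤ n) :
    2 * ∑ d ∈ Finset.Icc (1:ℤ) (n-1), d = n * (n-1) := by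
  have hc : ((n-1).toNat : ℤ) = n - 1 := Int.toNat_of_nonneg (by omega)
  have := gauss1_nat (n-1).toNat
  rw [hc] at this
  linarith

private lemma gauss2 (n : ℤ) (h : 1 ≤ n) :
    6 * ∑ d ∈ Finset.Icc (1:ℤ) (n-1), d^2 = n * (n-1) * (2*n-1) := by
  have hc : ((n-1).toNat : ℤ) = n - 1 := Int.toNat_of_nonneg (by omega)
  have := gauss2_nat (n-1).toNat
  rw [hc] at this
  nlinarith [this]

/-- Let `N > 1` with `ε` a root of `X^2 - 3X + 1` mod `N`, `ε` coprime to `N`. Then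
`4 * ∑_{d=1}^{N-1} d * ((-1 - d*ε) mod N) = N * (N-1)^2`. -/
theorem stmt_0 (N ε : ℤ) (hN : 1 < N) (hroot : ε ^ 2 ≡ 3 * ε - 1 [ZMOD N])
    (hcop : IsCoprime ε N) :
    4 * ∑ d ∈ Finset.Icc (1 : ℤ) (N - 1), d * ((-1 - d * ε) % N) = N * (N - 1) ^ 2 := by
  have hN0 : (0:ℤ) < N := by omega
  obtain ⟨k, hk⟩ : (N:ℤ) ∣ (ε-1)*(ε-1) - (ε-1) - 1 := by
    obtain ⟨c, hc⟩ := hroot.dvd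
    exact ⟨-c, by linear_combination -hc⟩
  set s := Finset.Icc (1:ℤ) (N-1) with hs
  set m : ℤ → ℤ := fun d => (d * (ε-1)) % N with hm
  set u : ℤ → ℤ := fun d => m (m d) with hu
  have hmb : ∀ d : ℤ, 0 ≤ m d ∧ m d < N := fun d =>
    ⟨Int.emod_nonneg _ (by omega), Int.emod_lt_of_pos _ hN0⟩
  have hub : ∀ d : ℤ, 0 ≤ u d ∧ u d < N := fun d => hmb (m d)
  have huε : ∀ d : ℤ, u d = (d * ε) % N := by
    intro d
    show (((d * (ε-1)) % N) * (ε-1)) % N = (d * ε) % N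
    rw [emod_mul_emod]
    have h : d * (ε-1) * (ε-1) = d * ε + N * (d * k) := by linear_combination d * hk
    rw [h, Int.add_mul_emod_self_left]
  have hre : ∀ F : ℤ → ℤ, ∑ d ∈ s, F (m d) = ∑ d ∈ s, F d := by
    intro F
    have hab : (ε-1) * (ε-2) = 1 + N * k := by linear_combination hk
    exact reindex hN k hab F
  have hw : ∀ d ∈ s, d + m d - u d = 0 ∨ d + m d - u d = N := by
    intro d hd
    rw [hs, Finset.mem_Icc] at hd
    obtain ⟨h1, h2⟩ := hmb d
    obtain ⟨h3, h4⟩ := hub d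
    have hdvd : N ∣ d + m d - u d := by
      obtain ⟨q1, hq1⟩ : N ∣ d * (ε-1) - m d := Int.dvd_self_sub_of_emod_eq rfl
      obtain ⟨q2, hq2⟩ : N ∣ d * ε - u d := by
        rw [huε d]; exact Int.dvd_self_sub_of_emod_eq rfl
      exact ⟨-q1 + q2, by linear_combination -hq1 + hq2⟩
    obtain ⟨t, ht⟩ := hdvd
    have hlt : t < 2 := by nlinarith
    have hgt : -1 < t := by nlinarith
    have h01 : t = 0 ∨ t = 1 := by omega
    rcases h01 with h | h <;> [left; right] <;> rw [ht, h] <;> ring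
  set G := ∑ d ∈ s, d with hG
  set R := ∑ d ∈ s, d^2 with hR
  set P := ∑ d ∈ s, d * m d with hP
  set Q := ∑ d ∈ s, d * u d with hQ
  set Wd := ∑ d ∈ s, d * (d + m d - u d) with hWd
  have h1 : ∑ d ∈ s, m d = G := hre (fun x => x)
  have h2 : ∑ d ∈ s, (m d)^2 = R := hre (fun x => x^2)
  have h5 : ∑ d ∈ s, u d = G := by
    have h := hre m
    rw [h1] at h
    exact h
  have h3 : ∑ d ∈ s, (u d)^2 = R := by
    have h := hre (fun x => (m x)^2)
    rw [h2] at h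
    exact h
  have h4 : ∑ d ∈ s, (m d) * (u d) = P := hre (fun x => x * m x)
  have hE1 : ∑ d ∈ s, (d + m d - u d) = G := by
    rw [Finset.sum_sub_distrib, Finset.sum_add_distrib, h1, h5]
    ring
  have hE2 : ∑ d ∈ s, (m d) * (d + m d - u d) = R := by
    have hc : ∑ d ∈ s, (m d) * (d + m d - u d)
        = ∑ d ∈ s, (d * m d + (m d)^2 - (m d) * (u d)) :=
      Finset.sum_congr rfl (fun d _ => by ring)
    rw [hc, Finset.sum_sub_distrib, Finset.sum_add_distrib, h2, h4, ← hP]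
    ring
  have hE3 : ∑ d ∈ s, (d + m d - u d)^2 = N * G := by
    have hc : ∑ d ∈ s, (d + m d - u d)^2 = ∑ d ∈ s, N * (d + m d - u d) :=
      Finset.sum_congr rfl (fun d hd => by
        rcases hw d hd with h | h <;> rw [h] <;> ring)
    rw [hc, ← Finset.mul_sum, hE1]
  have hE4 : 2 * Wd = N * G + 2 * P - R := by
    have hc : ∑ d ∈ s, (u d)^2
        = ∑ d ∈ s, (d^2 + (m d)^2 + (d + m d - u d)^2
            + 2 * (d * m d) - 2 * (d * (d + m d - u d))
            - 2 * ((m d) * (d + m d - u d))) :=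
      Finset.sum_congr rfl (fun d _ => by ring)
    rw [h3] at hc
    rw [Finset.sum_sub_distrib, Finset.sum_sub_distrib, Finset.sum_add_distrib,
      Finset.sum_add_distrib, Finset.sum_add_distrib,
      ← Finset.mul_sum, ← Finset.mul_sum, ← Finset.mul_sum,
      h2, hE3, hE2, ← hR, ← hP, ← hWd] at hc
    linarith
  have hE5 : Q = R + P - Wd := by
    have hc : ∑ d ∈ s, d * u d
        = ∑ d ∈ s, (d^2 + d * m d - d * (d + m d - u d)) :=
      Finset.sum_congr rfl (fun d _ => by ring)
    rw [hQ, hc, Finset.sum_sub_distrib, Finset.sum_add_distrib, ← hR, ← hP, ← hWd]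
  have hgoal : ∑ d ∈ s, d * ((-1 - d * ε) % N) = (N-1) * G - Q := by
    have hc : ∀ d ∈ s, d * ((-1 - d * ε) % N) = (N-1) * d - d * u d := by
      intro d hd
      rw [hs, Finset.mem_Icc] at hd
      have hval : (-1 - d * ε) % N = N - 1 - u d := by
        obtain ⟨h3, h4⟩ := hub d
        have hq : N ∣ (-1 - d * ε) - (N - 1 - u d) := by
          obtain ⟨q2, hq2⟩ : N ∣ d * ε - u d := by
            rw [huε d]; exact Int.dvd_self_sub_of_emod_eq rfl
          exact ⟨-q2 - 1, by linear_combination -hq2⟩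
        obtain ⟨c, hcc⟩ := hq
        have he : -1 - d * ε = (N - 1 - u d) + N * c := by linarith
        rw [he, Int.add_mul_emod_self_left,
          Int.emod_eq_of_lt (by omega) (by omega)]
      rw [hval]
      ring
    rw [Finset.sum_congr rfl hc, Finset.sum_sub_distrib, ← Finset.mul_sum, ← hQ, ← hG]
  rw [hgoal]
  have hg : 2 * G = N * (N-1) := by rw [hG, hs]; exact gauss1 N (by omega)
  have hr : 6 * R = N * (N-1) * (2*N-1) := by rw [hR, hs]; exact gauss2 N (by omega)
  linear_combination (-4 : ℤ) * hE5 + 2 * hE4 + (3*N-2) * hg - hr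
end

section
/- Let N > 1, k ≥ 1 be integers and v_1, …, v_k units of Z/N. For each i with 0 ≤ i < k, the value Σ_{z ∈ R(y)} C(z_1 + ⋯ + z_k, i) is independent of y ∈ Z/N, where R(y) = { (z_1,…,z_k) ∈ {0,…,N-1}^k : Σ_j z_j v_j ≡ y mod N }; in fact it equals (1/N)·Σ_{i_1+⋯+i_k = i} C(N, i_1+1)···C(N, i_k+1), a polynomial in N depending only on i and k. -/
open Finset

/-- Hockey stick identity. -/
lemma aux_hockey (N m : ℕ) : ∑ t ∈ range N, t.choose m = N.choose (m + 1) := by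
  induction N with
  | zero => simp
  | succ n ih => rw [sum_range_succ, ih, Nat.choose_succ_succ, add_comm]

/-- Multinomial Vandermonde identity. -/
lemma aux_vander {ι : Type*} [DecidableEq ι] (s : Finset ι) (z : ι → ℕ) (i : ℕ) :
    (∑ j ∈ s, z j).choose i = ∑ m ∈ s.piAntidiag i, ∏ j ∈ s, (z j).choose (m j) := by
  induction s using Finset.cons_induction generalizing i with
  | empty => cases i <;> simp
  | cons a s ha ih =>
    rw [sum_cons, Nat.add_choose_eq, piAntidiag_cons, sum_disjiUnion]
    refine sum_congr rfl fun p hp => ?_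
    rw [sum_map, ih p.2, mul_sum]
    refine sum_congr rfl fun f hf => ?_
    have hfa : f a = 0 := by
      by_contra h
      exact ha ((mem_piAntidiag.mp hf).2 a h)
    rw [prod_cons]
    simp only [addRightEmbedding_apply, Pi.add_apply]
    congr 1
    · simp [hfa]
    · refine prod_congr rfl fun j hj => ?_
      rw [if_neg (fun h => ha (by rwa [h] at hj)), add_zero]

/-- The key per-tuple computation: if `m r = 0` for some `r`, then `N` times the sum of
`∏ j, C(z j, m j)` over the fiber `R(y)` equals `∏ j, C(N, m j + 1)`. -/
lemma aux_key (N k : ℕ) (hN : 1 < N) (v : Fin k → (ZMod N)ˣ) (m : Fin k → ℕ) (r : Fin k)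
    (hr : m r = 0) (y : ZMod N) :
    N * ∑ z ∈ (Fintype.piFinset fun _ : Fin k => Finset.range N).filter
        (fun z => ∑ j, (z j : ZMod N) * (v j : ZMod N) = y),
      ∏ j, (z j).choose (m j)
    = ∏ j, N.choose (m j + 1) := by
  classical
  haveI : NeZero N := ⟨by omega⟩
  set g : (Fin k → ℕ) → ℕ := fun z => ∏ j, (z j).choose (m j) with hg
  set S : Finset (Fin k → ℕ) := Fintype.piFinset fun _ : Fin k => Finset.range N with hS
  set T : ZMod N → Finset (Fin k → ℕ) :=
    fun y' => S.filter (fun z => ∑ j, (z j : ZMod N) * (v j : ZMod N) = y') with hT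
  -- sum over a fiber with the function `update`d at `r`
  have hupd : ∀ (z : Fin k → ℕ) (t : ℕ),
      ∑ j, ((Function.update z r t j : ℕ) : ZMod N) * (v j : ZMod N)
        = (t : ZMod N) * (v r : ZMod N)
          + ∑ j ∈ univ.erase r, ((z j : ℕ) : ZMod N) * (v j : ZMod N) := by
    intro z t
    rw [← Finset.add_sum_erase _ _ (mem_univ r), Function.update_self]
    congr 1
    refine sum_congr rfl fun j hj => ?_
    rw [Function.update_of_ne (mem_erase.mp hj).1]
  have hbase : ∀ z : Fin k → ℕ,
      ∑ j, ((z j : ℕ) : ZMod N) * (v j : ZMod N)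
        = ((z r : ℕ) : ZMod N) * (v r : ZMod N)
          + ∑ j ∈ univ.erase r, ((z j : ℕ) : ZMod N) * (v j : ZMod N) := by
    intro z
    have := hupd z (z r)
    rwa [Function.update_eq_self] at this
  -- the translation map on fibers
  set φ : ZMod N → (Fin k → ℕ) → (Fin k → ℕ) :=
    fun c z => Function.update z r ((c + (z r : ZMod N)).val) with hφ
  have hmem : ∀ (c y₀ : ZMod N) (z : Fin k → ℕ), z ∈ T y₀ →
      φ c z ∈ T (y₀ + c * (v r : ZMod N)) := by
    intro c y₀ z hz
    rw [hT, mem_filter] at hz ⊢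
    obtain ⟨hzS, hzy⟩ := hz
    constructor
    · rw [hS, Fintype.mem_piFinset] at hzS ⊢
      intro j
      rcases eq_or_ne j r with rfl | hjr
      · simp only [hφ, Function.update_self, mem_range]
        exact ZMod.val_lt _
      · simpa only [hφ, Function.update_of_ne hjr] using hzS j
    · rw [hφ, hupd]
      rw [hbase z] at hzy
      have hcast : (((c + (z r : ZMod N)).val : ℕ) : ZMod N) = c + (z r : ZMod N) := by
        simp [ZMod.natCast_val, ZMod.cast_id]
      rw [hcast, ← hzy]
      ring
  have hginv : ∀ (c : ZMod N) (z : Fin k → ℕ), g (φ c z) = g z := by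
    intro c z
    refine prod_congr rfl fun j _ => ?_
    rcases eq_or_ne j r with rfl | hjr
    · simp [hφ, hr]
    · simp [hφ, Function.update_of_ne hjr]
  have hinv : ∀ (c : ZMod N) (z : Fin k → ℕ), z ∈ S → φ (-c) (φ c z) = z := by
    intro c z hz
    have hzr : z r < N := by
      rw [hS, Fintype.mem_piFinset] at hz
      simpa using hz r
    simp only [hφ, Function.update_idem, Function.update_self]
    have : ((-c) + (((c + (z r : ZMod N)).val : ℕ) : ZMod N)).val = z r := by
      rw [show (((c + (z r : ZMod N)).val : ℕ) : ZMod N) = c + (z r : ZMod N) by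
        simp [ZMod.natCast_val, ZMod.cast_id]]
      rw [neg_add_cancel_left, ZMod.val_natCast_of_lt hzr]
    rw [this, Function.update_eq_self]
  -- translation invariance of fiber sums
  have hstep : ∀ (c y₀ : ZMod N),
      ∑ z ∈ T (y₀ + c * (v r : ZMod N)), g z = ∑ z ∈ T y₀, g z := by
    intro c y₀
    refine (Finset.sum_nbij' (φ c) (φ (-c)) ?_ ?_ ?_ ?_ ?_).symm
    · intro z hz
      exact hmem c y₀ z hz
    · intro z hz
      have := hmem (-c) _ z hz
      have heq : y₀ + c * (v r : ZMod N) + -c * (v r : ZMod N) = y₀ := by ring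
      rwa [heq] at this
    · intro z hz
      exact hinv c z (mem_filter.mp hz).1
    · intro z hz
      have hzS : z ∈ S := (mem_filter.mp hz).1
      have := hinv (-c) z hzS
      rwa [neg_neg] at this
    · intro z hz
      exact (hginv c z).symm
  have hindep : ∀ y' : ZMod N, ∑ z ∈ T y', g z = ∑ z ∈ T y, g z := by
    intro y'
    have hc : y + ((y' - y) * ((v r)⁻¹ : (ZMod N)ˣ)) * (v r : ZMod N) = y' := by
      rw [mul_assoc, Units.inv_mul, mul_one]
      ring
    have := hstep ((y' - y) * ((v r)⁻¹ : (ZMod N)ˣ)) y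
    rwa [hc] at this
  have h1 : ∑ y' : ZMod N, ∑ z ∈ T y', g z = N * ∑ z ∈ T y, g z := by
    rw [Finset.sum_congr rfl fun y' _ => hindep y', sum_const, card_univ, ZMod.card,
      smul_eq_mul]
  have h2 : ∑ y' : ZMod N, ∑ z ∈ T y', g z = ∑ z ∈ S, g z :=
    Finset.sum_fiberwise S (fun z => ∑ j, (z j : ZMod N) * (v j : ZMod N)) g
  rw [← h1, h2]
  have h3 : ∑ z ∈ S, g z = ∏ j, ∑ t ∈ range N, t.choose (m j) :=
    (Finset.prod_univ_sum (fun _ => range N) (fun j t => t.choose (m j))).symm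
  rw [h3]
  exact prod_congr rfl fun j _ => aux_hockey N (m j)

/-- For `0 ≤ i < k`, the sum `∑_{z ∈ R(y)} C(z₁+⋯+z_k, i)` is independent of `y`:
`N` times it equals `∑_{i₁+⋯+i_k = i} C(N,i₁+1)⋯C(N,i_k+1)`. -/
theorem stmt_3 (N k : ℕ) (hN : 1 < N) (hk : 0 < k) (v : Fin k → (ZMod N)ˣ) (y : ZMod N)
    (i : ℕ) (hi : i < k) :
    N * ∑ z ∈ (Fintype.piFinset fun _ : Fin k => Finset.range N).filter
        (fun z => ∑ j, (z j : ZMod N) * (v j : ZMod N) = y),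
      Nat.choose (∑ j, z j) i
    = ∑ m ∈ Finset.Nat.antidiagonalTuple k i, ∏ j, Nat.choose N (m j + 1) := by
  classical
  have hvan : ∀ z : Fin k → ℕ, (∑ j, z j).choose i
      = ∑ m ∈ Finset.Nat.antidiagonalTuple k i, ∏ j, (z j).choose (m j) := fun z => by
    rw [← Finset.piAntidiag_univ_fin_eq_antidiagonalTuple, ← aux_vander]
  simp_rw [hvan]
  rw [Finset.sum_comm, Finset.mul_sum]
  refine sum_congr rfl fun m hm => ?_
  have hsum : ∑ j, m j = i := Finset.Nat.mem_antidiagonalTuple.mp hm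
  have hex : ∃ r, m r = 0 := by
    by_contra h
    push_neg at h
    have : k ≤ ∑ j, m j := by
      calc k = ∑ _j : Fin k, 1 := by simp
        _ ≤ ∑ j, m j := sum_le_sum fun j _ => Nat.one_le_iff_ne_zero.mpr (h j)
    omega
  obtain ⟨r, hr⟩ := hex
  exact aux_key N k hN v m r hr y
end

section
/- Let N > 1, k ≥ 1 be integers and v_1, …, v_k units of Z/N. For each y ∈ Z/N, Σ_{z ∈ R(y)} C(z_1 + ⋯ + z_k, k) = Σ_{(d_1,…,d_k): 1 ≤ d_j < N, Σ d_j v_j ≡ y mod N} d_1 d_2 ··· d_k + P_k(N), where P_k(N) = (1/N)·Σ_{i_1+⋯+i_k = k, i_1 i_2 ··· i_k = 0} C(N, i_1+1)···C(N, i_k+1) depends only on N and k. -/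
open Finset

/-- Decomposition of a sum over `antidiagonalTuple (k+1) n`. -/
lemma sum_antidiagonalTuple_succ {M : Type*} [AddCommMonoid M] (k n : ℕ)
    (f : (Fin (k + 1) → ℕ) → M) :
    ∑ m ∈ Finset.Nat.antidiagonalTuple (k + 1) n, f m
      = ∑ p ∈ Finset.HasAntidiagonal.antidiagonal n,
          ∑ m ∈ Finset.Nat.antidiagonalTuple k p.2, f (Fin.cons p.1 m) := by
  rw [Finset.sum_sigma']
  refine Finset.sum_nbij'
    (fun m : Fin (k + 1) → ℕ =>
      (⟨(m 0, ∑ j : Fin k, m j.succ), Fin.tail m⟩ : (_ : ℕ × ℕ) × (Fin k → ℕ)))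
    (fun x => Fin.cons x.1.1 x.2) ?_ ?_ ?_ ?_ ?_
  · intro m hm
    rw [Finset.Nat.mem_antidiagonalTuple] at hm
    refine Finset.mem_sigma.mpr ⟨?_, ?_⟩
    · rw [Finset.HasAntidiagonal.mem_antidiagonal]
      rw [Fin.sum_univ_succ] at hm
      exact hm
    · exact Finset.Nat.mem_antidiagonalTuple.mpr rfl
  · intro x hx
    rw [Finset.mem_sigma, Finset.HasAntidiagonal.mem_antidiagonal, Finset.Nat.mem_antidiagonalTuple] at hx
    rw [Finset.Nat.mem_antidiagonalTuple, Fin.sum_univ_succ]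
    simp [hx.2, hx.1]
  · intro m _
    exact Fin.cons_self_tail m
  · intro x hx
    rw [Finset.mem_sigma, Finset.HasAntidiagonal.mem_antidiagonal, Finset.Nat.mem_antidiagonalTuple] at hx
    have h2 : ∑ j : Fin k, (Fin.cons x.1.1 x.2 : Fin (k+1) → ℕ) j.succ = x.1.2 := by
      simp [hx.2]
    refine Sigma.ext ?_ ?_
    · rw [Prod.ext_iff]; exact ⟨rfl, hx.2⟩
    · simp
  · intro m _
    rw [Fin.cons_self_tail]

/-- Generalized Vandermonde identity. -/
lemma tuple_vandermonde : ∀ (k : ℕ) (n : ℕ) (z : Fin k → ℕ),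
    (∑ j, z j).choose n
      = ∑ m ∈ Finset.Nat.antidiagonalTuple k n, ∏ j, (z j).choose (m j)
  | 0, n, z => by
    cases n with
    | zero => simp
    | succ n => simp [Nat.choose_eq_zero_of_lt (Nat.succ_pos n)]
  | (k + 1), n, z => by
    rw [sum_antidiagonalTuple_succ]
    rw [Fin.sum_univ_succ, Nat.add_choose_eq]
    refine Finset.sum_congr rfl fun p hp => ?_
    rw [tuple_vandermonde k p.2 (fun i => z i.succ), Finset.mul_sum]
    refine Finset.sum_congr rfl fun m hm => ?_
    rw [Fin.prod_univ_succ]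
    simp [Fin.tail]

/-- Hockey stick for `range`. -/
lemma sum_range_choose_eq (N t : ℕ) (hN : 0 < N) :
    ∑ x ∈ Finset.range N, x.choose t = N.choose (t + 1) := by
  rw [Finset.range_eq_Ico]
  have h1 : ∑ x ∈ Finset.Ico 0 N, x.choose t = ∑ x ∈ Finset.Ico t N, x.choose t := by
    refine (Finset.sum_subset (Finset.Ico_subset_Ico (Nat.zero_le t) le_rfl) ?_).symm
    intro x hx hx'
    simp only [Finset.mem_Ico] at hx hx'
    exact Nat.choose_eq_zero_of_lt (by omega)
  rw [h1]
  have h2 : N = (N - 1) + 1 := by omega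
  rw [h2, Finset.Ico_add_one_right_eq_Icc, Nat.sum_Icc_choose]

/-- `∑_{z ∈ R(y)} C(z₁+⋯+z_k, k)` equals
`∑_{1 ≤ d_j < N, ∑ d_j v_j = y} d₁⋯d_k + P_k(N)` where
`P_k(N) = (1/N) ∑_{i₁+⋯+i_k = k, some i_r = 0} C(N,i₁+1)⋯C(N,i_k+1)`
(stated multiplied through by `N`). -/
theorem stmt_4 (N k : ℕ) (hN : 1 < N) (hk : 0 < k) (v : Fin k → (ZMod N)ˣ) (y : ZMod N) :
    N * ∑ z ∈ (Fintype.piFinset fun _ : Fin k => Finset.range N).filter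
        (fun z => ∑ j, (z j : ZMod N) * (v j : ZMod N) = y),
      Nat.choose (∑ j, z j) k
    = N * (∑ d ∈ (Fintype.piFinset fun _ : Fin k => Finset.Ico 1 N).filter
          (fun d => ∑ j, (d j : ZMod N) * (v j : ZMod N) = y), ∏ j, d j)
      + ∑ m ∈ (Finset.Nat.antidiagonalTuple k k).filter (fun m => ∃ r, m r = 0),
          ∏ j, Nat.choose N (m j + 1) := by
  haveI : NeZero N := ⟨by omega⟩
  have hNpos : 0 < N := by omega
  classical
  set c : (Fin k → ℕ) → Prop := fun z => ∑ j, (z j : ZMod N) * (v j : ZMod N) = y with hc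
  set S : Finset (Fin k → ℕ) :=
    (Fintype.piFinset fun _ : Fin k => Finset.range N).filter c with hSdef
  set T := Finset.Nat.antidiagonalTuple k k with hT
  set p : (Fin k → ℕ) → Prop := fun m => ∃ r, m r = 0 with hp
  set G : (Fin k → ℕ) → ℕ := fun m => ∑ z ∈ S, ∏ j, (z j).choose (m j) with hG
  -- Step A : Vandermonde + swap
  have hA : ∑ z ∈ S, Nat.choose (∑ j, z j) k = ∑ m ∈ T, G m := by
    rw [hG]
    rw [Finset.sum_comm]
    exact Finset.sum_congr rfl fun z _ => tuple_vandermonde k k z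
  -- Step B : the tuples with no zero entry form exactly {const 1}
  have hone : T.filter (fun m => ¬ p m) = {fun _ => 1} := by
    ext m
    simp only [hT, hp, Finset.mem_filter, Finset.Nat.mem_antidiagonalTuple,
      Finset.mem_singleton, not_exists]
    constructor
    · rintro ⟨hsum, hne⟩
      have h1 : ∀ i ∈ (Finset.univ : Finset (Fin k)), (1:ℕ) ≤ m i :=
        fun i _ => Nat.one_le_iff_ne_zero.mpr (hne i)
      have hcard : ∑ _i : Fin k, (1:ℕ) = ∑ i : Fin k, m i := by
        simp [hsum]
      have := (Finset.sum_eq_sum_iff_of_le h1).mp hcard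
      funext j
      exact (this j (Finset.mem_univ j)).symm
    · rintro rfl
      refine ⟨by simp, fun r => by simp⟩
  -- the const-1 term equals the product sum over Ico
  have hG1 : G (fun _ => 1)
      = ∑ d ∈ (Fintype.piFinset fun _ : Fin k => Finset.Ico 1 N).filter c, ∏ j, d j := by
    rw [hG]
    have h1 : ∀ z : Fin k → ℕ, ∏ j, (z j).choose 1 = ∏ j, z j := by
      intro z; exact Finset.prod_congr rfl fun j _ => Nat.choose_one_right _
    simp only [h1]
    refine (Finset.sum_subset ?_ ?_).symm
    · intro z hz
      simp only [hSdef, Finset.mem_filter, Fintype.mem_piFinset, Finset.mem_Ico,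
        Finset.mem_range] at hz ⊢
      exact ⟨fun j => (hz.1 j).2, hz.2⟩
    · intro z hz hz'
      simp only [hSdef, Finset.mem_filter, Fintype.mem_piFinset, Finset.mem_Ico,
        Finset.mem_range] at hz hz'
      have : ∃ j, z j = 0 := by
        by_contra hcon
        push_neg at hcon
        exact hz' ⟨fun j => ⟨Nat.one_le_iff_ne_zero.mpr (hcon j), hz.1 j⟩, hz.2⟩
      obtain ⟨j, hj⟩ := this
      exact Finset.prod_eq_zero (Finset.mem_univ j) hj
  -- Step C : key computation for tuples with a zero entry
  have hC : ∀ m ∈ T.filter p, N * G m = ∏ j, N.choose (m j + 1) := by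
    intro m hm
    rw [Finset.mem_filter] at hm
    obtain ⟨hmT, r, hr⟩ := hm
    set s : Fin k → Finset ℕ := fun j => if j = r then {0} else Finset.range N with hs
    have hwr : ∀ w ∈ Fintype.piFinset s, w r = 0 := by
      intro w hw
      have := Fintype.mem_piFinset.mp hw r
      simpa [hs] using this
    have hbij : G m = ∑ w ∈ Fintype.piFinset s, ∏ j, (w j).choose (m j) := by
      rw [hG]
      refine Finset.sum_nbij' (fun z => Function.update z r 0)
        (fun w => Function.update w r
          (((y - ∑ j, (w j : ZMod N) * (v j : ZMod N)) * ((v r)⁻¹ : (ZMod N)ˣ)).val))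
        ?_ ?_ ?_ ?_ ?_
      · intro z hz
        beta_reduce
        rw [Fintype.mem_piFinset]
        intro j
        by_cases h : j = r
        · subst h; simp [hs]
        · rw [Function.update_of_ne h]
          simp only [hs, if_neg h]
          exact (Finset.mem_filter.mp hz).1 |> Fintype.mem_piFinset.mp |> (· j)
      · intro w hw
        beta_reduce
        set g := ((y - ∑ j, (w j : ZMod N) * (v j : ZMod N)) * ((v r)⁻¹ : (ZMod N)ˣ)).val with hg
        rw [hSdef, Finset.mem_filter, Fintype.mem_piFinset]
        constructor
        · intro j
          by_cases h : j = r
          · subst h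
            rw [Function.update_self, Finset.mem_range]
            exact ZMod.val_lt _
          · rw [Function.update_of_ne h]
            have := Fintype.mem_piFinset.mp hw j
            simpa [hs, if_neg h] using this
        · show ∑ j, ((Function.update w r g j : ℕ) : ZMod N) * (v j : ZMod N) = y
          have hfun : (fun j => ((Function.update w r g j : ℕ) : ZMod N) * (v j : ZMod N))
              = Function.update (fun j => ((w j : ℕ) : ZMod N) * (v j : ZMod N)) r
                  ((g : ZMod N) * (v r : ZMod N)) := by
            funext j
            by_cases h : j = r
            · subst h; simp
            · rw [Function.update_of_ne h, Function.update_of_ne h]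
          rw [hfun, Finset.sum_update_of_mem (Finset.mem_univ r)]
          have hW : ∑ j ∈ Finset.univ \ {r}, ((w j : ℕ) : ZMod N) * (v j : ZMod N)
              = ∑ j, ((w j : ℕ) : ZMod N) * (v j : ZMod N) := by
            rw [Finset.sum_eq_sum_sdiff_singleton_add (Finset.mem_univ r)
              (fun j => ((w j : ℕ) : ZMod N) * (v j : ZMod N))]
            simp [hwr w hw]
          rw [hW, hg]
          set W := ∑ j, ((w j : ℕ) : ZMod N) * (v j : ZMod N) with hWdef
          have : (((((y - W) * ((v r)⁻¹ : (ZMod N)ˣ)).val : ℕ)) : ZMod N)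
              = (y - W) * ((v r)⁻¹ : (ZMod N)ˣ) := by
            simp [ZMod.natCast_val, ZMod.cast_id]
          rw [this, Units.inv_mul_cancel_right]
          exact sub_add_cancel y W
      · intro z hz
        beta_reduce
        rw [Function.update_idem]
        have hval : (((y - ∑ j, ((Function.update z r 0 j : ℕ) : ZMod N) * (v j : ZMod N))
            * ((v r)⁻¹ : (ZMod N)ˣ)).val) = z r := by
          have hsum' : ∑ j, ((Function.update z r 0 j : ℕ) : ZMod N) * (v j : ZMod N)
              = (∑ j, ((z j : ℕ) : ZMod N) * (v j : ZMod N)) - (z r : ZMod N) * (v r : ZMod N) := by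
            have hfun : (fun j => ((Function.update z r 0 j : ℕ) : ZMod N) * (v j : ZMod N))
                = Function.update (fun j => ((z j : ℕ) : ZMod N) * (v j : ZMod N)) r 0 := by
              funext j
              by_cases h : j = r
              · subst h; simp
              · rw [Function.update_of_ne h, Function.update_of_ne h]
            rw [hfun, Finset.sum_update_of_mem (Finset.mem_univ r), zero_add]
            rw [Finset.sum_eq_sum_sdiff_singleton_add (Finset.mem_univ r)
              (fun j => ((z j : ℕ) : ZMod N) * (v j : ZMod N)), add_sub_cancel_right]
          rw [hsum']
          have hcz : ∑ j, ((z j : ℕ) : ZMod N) * (v j : ZMod N) = y :=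
            (Finset.mem_filter.mp hz).2
          rw [hcz, sub_sub_cancel, Units.mul_inv_cancel_right]
          have hzlt : z r < N := by
            have := (Finset.mem_filter.mp hz).1 |> Fintype.mem_piFinset.mp |> (· r)
            simpa [Finset.mem_range] using this
          exact ZMod.val_cast_of_lt hzlt
        rw [hval, Function.update_eq_self]
      · intro w hw
        beta_reduce
        rw [Function.update_idem]
        have := hwr w hw
        rw [← this, Function.update_eq_self]
      · intro z hz
        refine Finset.prod_congr rfl fun j _ => ?_
        beta_reduce
        by_cases h : j = r
        · subst h; rw [hr, Nat.choose_zero_right, Nat.choose_zero_right]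
        · rw [Function.update_of_ne h]
    have hps : ∑ w ∈ Fintype.piFinset s, ∏ j, (w j).choose (m j)
        = ∏ j, ∑ x ∈ s j, x.choose (m j) :=
      (Finset.prod_univ_sum s (fun j x => x.choose (m j))).symm
    rw [hbij, hps]
    have hprod : ∏ j, N.choose (m j + 1)
        = ∏ j, ((if j = r then N else 1) * ∑ x ∈ s j, x.choose (m j)) := by
      refine Finset.prod_congr rfl fun j _ => ?_
      by_cases h : j = r
      · subst h
        have hsj : s j = {0} := if_pos rfl
        rw [if_pos rfl, hsj, hr, Finset.sum_singleton, Nat.choose_zero_right,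
          Nat.choose_one_right, mul_one]
      · have hsj : s j = Finset.range N := if_neg h
        rw [if_neg h, one_mul, hsj]
        exact (sum_range_choose_eq N (m j) hNpos).symm
    rw [hprod, Finset.prod_mul_distrib]
    congr 1
    simp
  -- assemble
  have hsplit := Finset.sum_filter_add_sum_filter_not T p G
  rw [hA, ← hsplit, Nat.mul_add, Finset.mul_sum, hone, Finset.sum_singleton, hG1]
  rw [Finset.sum_congr rfl hC]
  exact Nat.add_comm _ _
end

section
/- Let N > 1, k ≥ 1 be integers, v_1, …, v_k units of Z/N, and define H(y) = Σ_{(d_1,…,d_k): 1 ≤ d_j < N, d_1 v_1 + ⋯ + d_k v_k ≡ -y mod N} d_1 ··· d_k for y ∈ Z/N. Let q > 1 be an integer coprime to N with q ≡ 1 mod N. Then for any y ∈ Z/N (taking x with x ≡ y and adding l·v over 0 ≤ l_i < q): Σ_{0 ≤ l_1,…,l_k < q} H(y + l_1 v_1 + ⋯ + l_k v_k) = H(y) + N^{k-1} ((N-1)/2)^k (q^k - 1), interpreted as the identity 2^k · Σ_{0 ≤ l < q} H(y + l·v) = 2^k H(y) + N^{k-1} (N-1)^k (q^k - 1). -/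
open Finset

private lemma count_range_mul (N : ℕ) (hN : 0 < N) (m : ℕ) (z : ZMod N) :
    ((Finset.range (m * N)).filter (fun a : ℕ => ((a : ZMod N) = z))).card = m := by
  haveI : NeZero N := ⟨hN.ne'⟩
  induction m with
  | zero => simp
  | succ m ih =>
    have hmn : (m + 1) * N = m * N + N := by ring
    rw [hmn, Finset.range_add, Finset.filter_union, Finset.card_union_of_disjoint, ih]
    · congr 1
      rw [Finset.filter_map, Finset.card_map]
      have h2 : ((Finset.range N).filter
          (fun a : ℕ => ((fun x : ℕ => ((x : ZMod N) = z)) ∘ (addLeftEmbedding (m * N))) a))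
            = {z.val} := by
        ext j
        simp only [Finset.mem_filter, Finset.mem_range, Function.comp_apply,
          addLeftEmbedding_apply, Finset.mem_singleton]
        have hcast : ((m * N + j : ℕ) : ZMod N) = (j : ZMod N) := by
          push_cast
          simp [ZMod.natCast_self]
        rw [hcast]
        constructor
        · rintro ⟨hj, rfl⟩
          exact (ZMod.val_cast_of_lt hj).symm
        · rintro rfl
          exact ⟨ZMod.val_lt z, ZMod.natCast_zmod_val z⟩
      rw [h2, Finset.card_singleton]
    · refine Finset.disjoint_filter_filter ?_
      simp only [Finset.disjoint_left, Finset.mem_range, Finset.mem_map,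
        addLeftEmbedding_apply]
      rintro a ha ⟨b, _, rfl⟩
      omega

private lemma count_range_one (N m : ℕ) (hN : 0 < N) (z : ZMod N) :
    ((Finset.range (m * N + 1)).filter (fun a : ℕ => ((a : ZMod N) = z))).card * N
      = m * N + (if z = 0 then N else 0) := by
  haveI : NeZero N := ⟨hN.ne'⟩
  rw [Finset.range_add, Finset.filter_union, Finset.card_union_of_disjoint]
  · rw [count_range_mul N hN]
    have hcast : ((m * N : ℕ) : ZMod N) = 0 := by
      push_cast; simp [ZMod.natCast_self]
    have h1 : ((Finset.range 1).map (addLeftEmbedding (m * N))).filter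
        (fun a : ℕ => ((a : ZMod N) = z)) = if z = 0 then {m * N} else ∅ := by
      split_ifs with h
      · subst h
        ext a
        simp only [Finset.mem_filter, Finset.mem_map, Finset.mem_range, Finset.mem_singleton,
          addLeftEmbedding_apply]
        constructor
        · rintro ⟨⟨b, hb, rfl⟩, _⟩; omega
        · rintro rfl
          exact ⟨⟨0, by omega, by omega⟩, hcast⟩
      · apply Finset.filter_false_of_mem
        rintro a ha
        simp only [Finset.mem_map, Finset.mem_range, addLeftEmbedding_apply] at ha
        obtain ⟨b, hb, rfl⟩ := ha
        interval_cases b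
        simpa [hcast] using Ne.symm h
    rw [h1]
    split_ifs with h <;> simp [Nat.add_mul]
  · refine Finset.disjoint_filter_filter ?_
    simp only [Finset.disjoint_left, Finset.mem_range, Finset.mem_map,
      addLeftEmbedding_apply]
    rintro a ha ⟨b, _, rfl⟩
    omega

private lemma sum_pi_succ {M : Type*} [AddCommMonoid M] {k q : ℕ}
    (f : (Fin (k + 1) → ℕ) → M) :
    ∑ l ∈ Fintype.piFinset (fun _ : Fin (k + 1) => Finset.range q), f l
      = ∑ a ∈ Finset.range q, ∑ l ∈ Fintype.piFinset (fun _ : Fin k => Finset.range q),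
          f (Fin.cons a l) := by
  rw [← Finset.sum_product']
  refine (Finset.sum_bij' (fun (l : Fin (k + 1) → ℕ) (_ : l ∈ _) => ((l 0, Fin.tail l) : ℕ × (Fin k → ℕ)))
    (fun (p : ℕ × (Fin k → ℕ)) (_ : p ∈ _) => (Fin.cons p.1 p.2 : Fin (k + 1) → ℕ))
    ?_ ?_ ?_ ?_ ?_)
  · intro l hl
    simp only [Fintype.mem_piFinset] at hl
    simp only [Finset.mem_product, Fintype.mem_piFinset]
    exact ⟨hl 0, fun j => hl j.succ⟩
  · intro p hp
    simp only [Finset.mem_product, Fintype.mem_piFinset] at hp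
    simp only [Fintype.mem_piFinset]
    intro j
    refine Fin.cases ?_ ?_ j
    · simpa using hp.1
    · intro i; simpa using hp.2 i
  · intro l _
    simp [Fin.cons_self_tail]
  · intro p _
    simp
  · intro l _
    rw [Fin.cons_self_tail]

private lemma count_pi (N q : ℕ) (hN : 1 < N) (hq1 : q % N = 1) :
    ∀ (k : ℕ) (v : Fin k → (ZMod N)ˣ) (c : ZMod N),
    ((Fintype.piFinset (fun _ : Fin k => Finset.range q)).filter
        (fun l => ∑ j, (l j : ZMod N) * (v j : ZMod N) = c)).card * N
      = (if c = 0 then N else 0) + (q ^ k - 1) := by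
  intro k
  induction k with
  | zero =>
    intro v c
    simp only [pow_zero, Nat.sub_self, add_zero]
    simp [eq_comm]
    split_ifs <;> simp
  | succ k ih =>
    intro v c
    rw [Finset.card_filter, sum_pi_succ]
    have hstep : ∀ a ∈ Finset.range q,
        (∑ l ∈ Fintype.piFinset (fun _ : Fin k => Finset.range q),
          if (∑ j, (((Fin.cons a l : Fin (k + 1) → ℕ) j : ℕ) : ZMod N) * (v j : ZMod N)) = c then 1 else 0)
        = ((Fintype.piFinset (fun _ : Fin k => Finset.range q)).filter
            (fun l => ∑ j, (l j : ZMod N) * ((v j.succ : ZMod N))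
              = c - (a : ZMod N) * (v 0 : ZMod N))).card := by
      intro a _
      rw [Finset.card_filter]
      refine Finset.sum_congr rfl fun l _ => ?_
      congr 1
      rw [Fin.sum_univ_succ]
      simp only [Fin.cons_zero, Fin.cons_succ, eq_iff_iff]
      constructor
      · intro h; rw [eq_sub_iff_add_eq, add_comm]; exact h
      · intro h; rw [eq_sub_iff_add_eq, add_comm] at h; exact h
    rw [Finset.sum_congr rfl hstep, Finset.sum_mul]
    have hterm : ∀ a ∈ Finset.range q,
        ((Fintype.piFinset (fun _ : Fin k => Finset.range q)).filter
            (fun l => ∑ j, (l j : ZMod N) * ((v j.succ : ZMod N))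
              = c - (a : ZMod N) * (v 0 : ZMod N))).card * N
        = (if (a : ZMod N) = c * (((v 0)⁻¹ : (ZMod N)ˣ) : ZMod N) then N else 0) + (q ^ k - 1) := by
      intro a ha
      rw [ih (fun j => v j.succ) (c - (a : ZMod N) * (v 0 : ZMod N))]
      congr 1
      have hiff : (c - (a : ZMod N) * (v 0 : ZMod N) = 0)
          ↔ ((a : ZMod N) = c * (((v 0)⁻¹ : (ZMod N)ˣ) : ZMod N)) := by
        rw [sub_eq_zero, Units.eq_mul_inv_iff_mul_eq, eq_comm]
      simp only [hiff]
    rw [Finset.sum_congr rfl hterm, Finset.sum_add_distrib, Finset.sum_const,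
      ← Finset.sum_filter, Finset.sum_const, smul_eq_mul, smul_eq_mul]
    have hqm : q = q / N * N + 1 := by
      conv_lhs => rw [← Nat.mod_add_div q N]
      rw [hq1]; ring
    have hcount : ((Finset.range q).filter
        (fun a : ℕ => ((a : ZMod N) = c * (((v 0)⁻¹ : (ZMod N)ˣ) : ZMod N)))).card * N
        = q / N * N + (if c * (((v 0)⁻¹ : (ZMod N)ˣ) : ZMod N) = 0 then N else 0) := by
      conv_lhs => rw [hqm]
      exact count_range_one N (q / N) (by omega) _
    rw [hcount]
    have hzero : (c * (((v 0)⁻¹ : (ZMod N)ˣ) : ZMod N) = 0) ↔ (c = 0) :=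
      Units.mul_left_eq_zero _
    simp only [hzero, Finset.card_range]
    have h1 : 1 ≤ q ^ k := Nat.one_le_pow _ _ (by omega)
    have h2 : q ^ (k + 1) = q * q ^ k := by ring
    have h3 : q * (q ^ k - 1) = q ^ (k + 1) - q := by rw [h2, Nat.mul_sub, mul_one]
    rw [h3]
    have hq0 : 1 ≤ q := by omega
    have h4 : q ≤ q ^ (k + 1) := by
      calc q = q * 1 := by ring
        _ ≤ q * q ^ k := Nat.mul_le_mul_left q h1
        _ = q ^ (k + 1) := h2.symm
    have h5 : q / N * N = q - 1 := by omega
    rw [h5]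
    split_ifs <;> omega

/-- With `H(y) = ∑_{1 ≤ d_j < N, ∑ d_j v_j = -y} d₁⋯d_k` and `q ≡ 1 mod N`, `q` coprime
to `N`, we have `2^k ∑_{0 ≤ l < q} H(y + l⋅v) = 2^k H(y) + N^(k-1) (N-1)^k (q^k - 1)`. -/
theorem stmt_5 (N k q : ℕ) (hN : 1 < N) (hk : 0 < k) (hq : 1 < q)
    (hqcop : Nat.Coprime q N) (hq1 : q % N = 1) (v : Fin k → (ZMod N)ˣ)
    (H : ZMod N → ℕ)
    (hH : ∀ y : ZMod N,
      H y = ∑ d ∈ (Fintype.piFinset fun _ : Fin k => Finset.Ico 1 N).filter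
          (fun d => ∑ j, (d j : ZMod N) * (v j : ZMod N) = -y), ∏ j, d j)
    (y : ZMod N) :
    2 ^ k * ∑ l ∈ Fintype.piFinset (fun _ : Fin k => Finset.range q),
        H (y + ∑ j, (l j : ZMod N) * (v j : ZMod N))
    = 2 ^ k * H y + N ^ (k - 1) * (N - 1) ^ k * (q ^ k - 1) := by
  have hN0 : 0 < N := by omega
  set L := Fintype.piFinset (fun _ : Fin k => Finset.range q) with hL
  set D := Fintype.piFinset (fun _ : Fin k => Finset.Ico 1 N) with hD
  clear_value L D
  -- Step 2: multiply by N
  have hNk : N * N ^ (k - 1) = N ^ k := by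
    rw [← pow_succ']
    congr 1
    omega
  have hG : (∑ j ∈ Finset.Ico 1 N, j) * 2 = N * (N - 1) := by
    have : Finset.Ico 1 N = (Finset.range N).erase 0 := by
      ext a
      simp only [Finset.mem_Ico, Finset.mem_erase, Finset.mem_range]
      omega
    rw [this, Finset.sum_erase _ (by simp), Finset.sum_range_id_mul_two]
  have hGk : ∑ d ∈ D, ∏ j, d j = (∑ j ∈ Finset.Ico 1 N, j) ^ k := by
    rw [hD]
    calc ∑ d ∈ Fintype.piFinset (fun _ : Fin k => Finset.Ico 1 N), ∏ j, d j
        = ∏ _i : Fin k, ∑ j ∈ Finset.Ico 1 N, j :=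
          (Finset.prod_univ_sum (fun _ : Fin k => Finset.Ico 1 N) (fun _ j => j)).symm
      _ = (∑ j ∈ Finset.Ico 1 N, j) ^ k := by
          rw [Finset.prod_const, Finset.card_univ, Fintype.card_fin]
  -- Step 1: swap sums
  have hswap : ∑ l ∈ L, H (y + ∑ j, (l j : ZMod N) * (v j : ZMod N))
      = ∑ d ∈ D, (∏ j, d j) *
          ((L.filter (fun l => ∑ j, (l j : ZMod N) * (v j : ZMod N)
            = -(y + ∑ j, (d j : ZMod N) * (v j : ZMod N)))).card) := by
    simp only [hH]
    simp only [Finset.sum_filter]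
    rw [Finset.sum_comm]
    refine Finset.sum_congr rfl fun d hd => ?_
    have : ∀ l ∈ L, (if ∑ j, (d j : ZMod N) * (v j : ZMod N)
          = -(y + ∑ j, (l j : ZMod N) * (v j : ZMod N)) then (∏ j, d j) else 0)
        = (if ∑ j, (l j : ZMod N) * (v j : ZMod N)
          = -(y + ∑ j, (d j : ZMod N) * (v j : ZMod N)) then (∏ j, d j) else 0) := by
      intro l _
      congr 1
      simp only [eq_iff_iff]
      constructor
      · intro h; linear_combination h
      · intro h; linear_combination h
    rw [Finset.sum_congr rfl this, ← Finset.sum_filter, Finset.sum_const, smul_eq_mul, mul_comm]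
  have hNS : N * ∑ l ∈ L, H (y + ∑ j, (l j : ZMod N) * (v j : ZMod N))
      = N * H y + (q ^ k - 1) * (∑ j ∈ Finset.Ico 1 N, j) ^ k := by
    rw [hswap, Finset.mul_sum]
    have hterm : ∀ d ∈ D, N * ((∏ j, d j) *
          ((L.filter (fun l => ∑ j, (l j : ZMod N) * (v j : ZMod N)
            = -(y + ∑ j, (d j : ZMod N) * (v j : ZMod N)))).card))
        = N * (if ∑ j, (d j : ZMod N) * (v j : ZMod N) = -y then (∏ j, d j) else 0)
            + (q ^ k - 1) * (∏ j, d j) := by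
      intro d hd
      have hc := count_pi N q hN hq1 k v (-(y + ∑ j, (d j : ZMod N) * (v j : ZMod N)))
      have hrw : N * ((∏ j, d j) *
          ((L.filter (fun l => ∑ j, (l j : ZMod N) * (v j : ZMod N)
            = -(y + ∑ j, (d j : ZMod N) * (v j : ZMod N)))).card))
          = (∏ j, d j) * (((L.filter (fun l => ∑ j, (l j : ZMod N) * (v j : ZMod N)
            = -(y + ∑ j, (d j : ZMod N) * (v j : ZMod N)))).card) * N) := by ring
      rw [hrw, hL, hc]
      have hiff : (-(y + ∑ j, (d j : ZMod N) * (v j : ZMod N)) = 0)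
          ↔ (∑ j, (d j : ZMod N) * (v j : ZMod N) = -y) := by
        rw [neg_eq_zero]
        constructor
        · intro h; linear_combination h
        · intro h; linear_combination h
      simp only [hiff]
      split_ifs <;> ring
    rw [Finset.sum_congr rfl hterm, Finset.sum_add_distrib, ← Finset.mul_sum,
      ← Finset.sum_filter, ← hH y, ← Finset.mul_sum, hGk]
  -- Step 3: conclude
  refine Nat.eq_of_mul_eq_mul_left hN0 ?_
  calc N * (2 ^ k * ∑ l ∈ L, H (y + ∑ j, (l j : ZMod N) * (v j : ZMod N)))
      = 2 ^ k * (N * ∑ l ∈ L, H (y + ∑ j, (l j : ZMod N) * (v j : ZMod N))) := by ring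
    _ = 2 ^ k * (N * H y + (q ^ k - 1) * (∑ j ∈ Finset.Ico 1 N, j) ^ k) := by rw [hNS]
    _ = N * (2 ^ k * H y) + (q ^ k - 1) * (((∑ j ∈ Finset.Ico 1 N, j) * 2) ^ k) := by
        rw [mul_pow]; ring
    _ = N * (2 ^ k * H y) + (q ^ k - 1) * (N * N ^ (k - 1) * (N - 1) ^ k) := by
        rw [hG, mul_pow, ← hNk]
    _ = N * (2 ^ k * H y + N ^ (k - 1) * (N - 1) ^ k * (q ^ k - 1)) := by ring
end

section
/- Fix integers N > 1, h ≥ 1 with gcd(N, h) = 1, a prime power q with q ≡ 1 mod Nh, an integer n ≥ 1, an integer s with 1 ≤ s ≤ h, and an integer t with 1 ≤ t ≤ N. Define Φ = { m ∈ Z : (h - s + q^n s)/h ≤ m < q^n + (h - s + q^n s)/h, and m♯_N > t } and Ψ = { m ∈ Z : 1 + s(q^n - 1)/(Nh) ≤ m < 1 + s(q^n - 1)/(Nh) + (N - t)(q^n - 1)/N }, where m♯_N is the unique integer in (0, N] congruent to m mod N. Then the map ι sending m = m♯_N + kN to (k + 1) + (N - m♯_N)·(q^n - 1)/N is a bijection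 from Φ to Ψ. -/
set_option maxHeartbeats 1000000 in
/-- The Ferrero–Greenberg map `ι : m = m♯_N + kN ↦ (k+1) + (N - m♯_N)(q^n-1)/N` is a
bijection from `Φ` to `Ψ`, where `m♯_N = N - (N - m) % N ∈ (0, N]` is the representative
of `m` mod `N`. -/
theorem stmt_7 (N h q : ℤ) (n : ℕ) (s t : ℤ) (hN : 1 < N) (hh : 1 ≤ h)
    (hcop : IsCoprime N h) (hq : ∃ (p e : ℕ), Nat.Prime p ∧ q = (p : ℤ) ^ e)
    (hqmod : q ≡ 1 [ZMOD N * h]) (hn : 1 ≤ n) (hs1 : 1 ≤ s) (hs2 : s ≤ h)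
    (ht1 : 1 ≤ t) (ht2 : t ≤ N) :
    Set.BijOn
      (fun m : ℤ => ((m - (N - (N - m) % N)) / N + 1)
        + (N - (N - (N - m) % N)) * ((q ^ n - 1) / N))
      {m : ℤ | (h - s + q ^ n * s) / h ≤ m ∧ m < q ^ n + (h - s + q ^ n * s) / h ∧
        t < N - (N - m) % N}
      {m : ℤ | 1 + s * (q ^ n - 1) / (N * h) ≤ m ∧
        m < 1 + s * (q ^ n - 1) / (N * h) + (N - t) * ((q ^ n - 1) / N)} := by
  have hN0 : (0:ℤ) < N := by omega
  have hh0 : (0:ℤ) < h := by omega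
  have hq1 : (1:ℤ) ≤ q := by
    obtain ⟨p, e, hp, rfl⟩ := hq
    have : (1:ℕ) ≤ p ^ e := Nat.one_le_iff_ne_zero.mpr (pow_ne_zero e hp.pos.ne')
    exact_mod_cast this
  have hQ1 : (1:ℤ) ≤ q ^ n := one_le_pow₀ hq1
  obtain ⟨c, hc⟩ : (N * h) ∣ q ^ n - 1 := by
    have h2 := (hqmod.pow n).dvd
    simpa using (dvd_neg.2 h2)
  have hc0 : 0 ≤ c := by
    by_contra hcon
    push_neg at hcon
    nlinarith [mul_pos (mul_pos hN0 hh0) (neg_pos.2 hcon)]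
  have hQ : q ^ n = 1 + N * h * c := by linarith
  have e1 : (h - s + q ^ n * s) / h = 1 + N * (s * c) := by
    have h1 : h - s + q ^ n * s = h * (1 + N * (s * c)) := by rw [hQ]; ring
    rw [h1, Int.mul_ediv_cancel_left _ hh0.ne']
  have e2 : 1 + s * (q ^ n - 1) / (N * h) = 1 + s * c := by
    have h1 : s * (q ^ n - 1) = (N * h) * (s * c) := by rw [hc]; ring
    rw [h1, Int.mul_ediv_cancel_left _ (mul_pos hN0 hh0).ne']
  have e3 : (q ^ n - 1) / N = h * c := by
    have h1 : q ^ n - 1 = N * (h * c) := by rw [hc]; ring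
    rw [h1, Int.mul_ediv_cancel_left _ hN0.ne']
  simp only [e1, e2, e3]
  simp only [hQ]
  -- key structural lemma about elements of Φ
  have key : ∀ m : ℤ, 1 + N * (s * c) ≤ m → m < 1 + N * h * c + (1 + N * (s * c)) →
      t < N - (N - m) % N →
      ∃ r k : ℤ, N - (N - m) % N = r ∧ m = r + N * k ∧ t < r ∧ r ≤ N ∧
        s * c ≤ k ∧ k ≤ s * c + h * c - 1 ∧
        ((m - (N - (N - m) % N)) / N + 1) + (N - (N - (N - m) % N)) * (h * c)
          = (k + 1) + (N - r) * (h * c) := by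
    intro m h1 h2 h3
    set r := N - (N - m) % N with hrdef
    set k := -((N - m) / N) with hkdef
    have hem1 := Int.emod_nonneg (N - m) hN0.ne'
    have hem2 := Int.emod_lt_of_pos (N - m) hN0
    have hrle : r ≤ N := by linarith
    have hmk : m = r + N * k := by
      have h4 := Int.emod_add_mul_ediv (N - m) N
      have h5 : N * k = -(N * ((N - m) / N)) := by rw [hkdef]; ring
      linarith
    have hk1 : s * c ≤ k := by
      have h5 : N * (s * c) < N * (k + 1) := by linarith
      have h6 := lt_of_mul_lt_mul_left h5 hN0.le
      have := Int.lt_iff_add_one_le.mp h6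
      linarith
    have hk2 : k ≤ s * c + h * c - 1 := by
      have h5 : N * k < N * (s * c + h * c) := by linarith
      have h6 := lt_of_mul_lt_mul_left h5 hN0.le
      have := Int.lt_iff_add_one_le.mp h6
      linarith
    have hfv : (m - r) / N = k := by
      have h6 : m - r = N * k := by linarith
      rw [h6, Int.mul_ediv_cancel_left _ hN0.ne']
    exact ⟨r, k, rfl, hmk, h3, hrle, hk1, hk2, by rw [hfv]⟩
  refine ⟨?_, ?_, ?_⟩
  · -- MapsTo
    intro m hm
    simp only [Set.mem_setOf_eq] at hm ⊢
    obtain ⟨r, k, hr, hmk, htr, hrN, hk1, hk2, hfv⟩ := key m hm.1 hm.2.1 hm.2.2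
    rw [hfv]
    constructor
    · have h5 : 0 ≤ (N - r) * (h * c) := mul_nonneg (by omega) (mul_nonneg hh0.le hc0)
      linarith
    · have h5 : (N - r) * (h * c) ≤ (N - t - 1) * (h * c) :=
        mul_le_mul_of_nonneg_right (by omega) (mul_nonneg hh0.le hc0)
      linarith
  · -- InjOn
    intro m1 hm1 m2 hm2 heq
    simp only [Set.mem_setOf_eq] at hm1 hm2
    obtain ⟨r1, k1, hr1, hmk1, htr1, hrN1, hk11, hk12, hfv1⟩ := key m1 hm1.1 hm1.2.1 hm1.2.2
    obtain ⟨r2, k2, hr2, hmk2, htr2, hrN2, hk21, hk22, hfv2⟩ := key m2 hm2.1 hm2.2.1 hm2.2.2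
    simp only at heq
    rw [hfv1, hfv2] at heq
    have hd1 : 1 ≤ h * c := by linarith
    have hreq : r1 = r2 := by
      rcases lt_trichotomy r1 r2 with hlt | he | hgt
      · exfalso
        have h5 : (r1 - r2) * (h * c) ≤ (-1) * (h * c) :=
          mul_le_mul_of_nonneg_right (by omega) (by linarith)
        linarith [h5, heq, hk11, hk22]
      · exact he
      · exfalso
        have h5 : (1:ℤ) * (h * c) ≤ (r1 - r2) * (h * c) :=
          mul_le_mul_of_nonneg_right (by omega) (by linarith)
        linarith [h5, heq, hk12, hk21]
    have hkeq : k1 = k2 := by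
      rw [hreq] at heq
      linarith
    rw [hmk1, hmk2, hreq, hkeq]
  · -- SurjOn
    intro y hy
    simp only [Set.mem_setOf_eq] at hy
    obtain ⟨hy1, hy2⟩ := hy
    have hd1 : 0 < h * c := by
      by_contra hcon
      push_neg at hcon
      nlinarith [mul_nonneg (show (0:ℤ) ≤ N - t by omega) (neg_nonneg.2 hcon)]
    obtain ⟨w, j, hw0, hwN, hj0, hjlt, huwj⟩ :
        ∃ w j : ℤ, 0 ≤ w ∧ w < N - t ∧ 0 ≤ j ∧ j < h * c ∧
          y - (1 + s * c) = h * c * w + j := by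
      refine ⟨(y - (1 + s * c)) / (h * c), (y - (1 + s * c)) % (h * c), ?_, ?_, ?_, ?_, ?_⟩
      · exact Int.ediv_nonneg (by linarith) hd1.le
      · rw [Int.ediv_lt_iff_lt_mul hd1]
        linarith
      · exact Int.emod_nonneg _ hd1.ne'
      · exact Int.emod_lt_of_pos _ hd1
      · have := Int.mul_ediv_add_emod (y - (1 + s * c)) (h * c)
        linarith
    have hrm : (N - (N - w + N * (s * c + j))) % N = w := by
      have h7 : N - (N - w + N * (s * c + j)) = w + N * (-(s * c + j)) := by ring
      rw [h7, Int.add_mul_emod_self_left, Int.emod_eq_of_lt hw0 (by omega)]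
    have hNj0 : 0 ≤ N * j := mul_nonneg hN0.le hj0
    have hNjle : N * j ≤ N * (h * c - 1) := by
      have := Int.lt_iff_add_one_le.mp hjlt
      exact mul_le_mul_of_nonneg_left (by linarith) hN0.le
    have hval : ((N - w + N * (s * c + j) - (N - (N - (N - w + N * (s * c + j))) % N)) / N + 1)
        + (N - (N - (N - (N - w + N * (s * c + j))) % N)) * (h * c) = y := by
      rw [hrm, sub_sub_cancel]
      have h8 : N - w + N * (s * c + j) - (N - w) = N * (s * c + j) := by ring
      rw [h8, Int.mul_ediv_cancel_left _ hN0.ne']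
      linarith
    refine ⟨N - w + N * (s * c + j), ⟨?_, ?_, ?_⟩, hval⟩
    · linarith
    · linarith
    · rw [hrm]; omega
end

section
/- In the setting of the Ferrero-Greenberg map: with N > 1, h ≥ 1, gcd(N,h) = 1, q a power of a prime p with q ≡ 1 mod Nh, n ≥ 1, 1 ≤ s ≤ h, 1 ≤ t ≤ N, and ι: Φ → Ψ the bijection sending m = m♯_N + kN to (k+1) + (N - m♯_N)(q^n - 1)/N, we have m ≡ N·ι(m) (mod q^n) for all m ∈ Φ; consequently p divides m if and only if p divides ι(m). -/
/-- In the Ferrero–Greenberg setting with `q = p^e` (`e ≥ 1`), for all `m ∈ Φ` we have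
`m ≡ N·ι(m) (mod q^n)`, and consequently `p ∣ m ↔ p ∣ ι(m)`. -/
theorem stmt_8 (N h : ℤ) (p e : ℕ) (hp : p.Prime) (he : 1 ≤ e) (q : ℤ)
    (hqdef : q = (p : ℤ) ^ e) (n : ℕ) (s t : ℤ) (hN : 1 < N) (hh : 1 ≤ h)
    (hcop : IsCoprime N h) (hqmod : q ≡ 1 [ZMOD N * h]) (hn : 1 ≤ n)
    (hs1 : 1 ≤ s) (hs2 : s ≤ h) (ht1 : 1 ≤ t) (ht2 : t ≤ N) (m : ℤ)
    (hm : m ∈ {m : ℤ | (h - s + q ^ n * s) / h ≤ m ∧ m < q ^ n + (h - s + q ^ n * s) / h ∧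
      t < N - (N - m) % N}) :
    m ≡ N * (((m - (N - (N - m) % N)) / N + 1)
        + (N - (N - (N - m) % N)) * ((q ^ n - 1) / N)) [ZMOD q ^ n] ∧
    ((p : ℤ) ∣ m ↔ (p : ℤ) ∣ (((m - (N - (N - m) % N)) / N + 1)
        + (N - (N - (N - m) % N)) * ((q ^ n - 1) / N))) := by
  set r : ℤ := N - (N - m) % N with hrdef
  set I : ℤ := ((m - r) / N + 1) + (N - r) * ((q ^ n - 1) / N) with hIdef
  have hNdvd_mr : N ∣ m - r := by
    refine ⟨-((N - m) / N), ?_⟩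
    have := Int.emod_def (N - m) N
    rw [hrdef]
    linarith
  have hq1 : N ∣ q - 1 := by
    have hd : (N * h) ∣ (1 - q) := Int.ModEq.dvd hqmod
    have : N ∣ (1 - q) := (dvd_mul_right N h).trans hd
    simpa [neg_sub] using dvd_neg.mpr this
  have hqn1 : N ∣ q ^ n - 1 := by
    have := sub_dvd_pow_sub_pow q 1 n
    rw [one_pow] at this
    exact hq1.trans this
  have h1 : (m - r) / N * N = m - r := Int.ediv_mul_cancel hNdvd_mr
  have h2 : (q ^ n - 1) / N * N = q ^ n - 1 := Int.ediv_mul_cancel hqn1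
  have key : N * I - m = (N - r) * q ^ n := by
    rw [hIdef]
    linear_combination h1 + (N - r) * h2
  constructor
  · rw [Int.modEq_iff_dvd, key]
    exact dvd_mul_left _ _
  · have hpprime : Prime ((p : ℤ)) := Nat.prime_iff_prime_int.mp hp
    have hpq : (p : ℤ) ∣ q := by
      rw [hqdef]; exact dvd_pow_self _ (by omega)
    have hpqn : (p : ℤ) ∣ q ^ n := hpq.trans (dvd_pow_self _ (by omega))
    have hpN : ¬ (p : ℤ) ∣ N := by
      intro hd
      have h1' : (p : ℤ) ∣ q - 1 := hd.trans hq1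
      have : (p : ℤ) ∣ 1 := by
        have := dvd_sub hpq h1'
        simpa using this
      exact hpprime.not_dvd_one this
    constructor
    · intro hpm
      have : (p : ℤ) ∣ N * I := by
        have : N * I = m + (N - r) * q ^ n := by linarith
        rw [this]
        exact dvd_add hpm (Dvd.dvd.mul_left hpqn _)
      rcases hpprime.dvd_mul.mp this with hc | hc
      · exact absurd hc hpN
      · exact hc
    · intro hpI
      have : (p : ℤ) ∣ N * I - (N - r) * q ^ n := by
        exact dvd_sub (Dvd.dvd.mul_left hpI _) (Dvd.dvd.mul_left hpqn _)
      have hm' : m = N * I - (N - r) * q ^ n := by linarith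
      rwa [← hm'] at this
end

section
/- Let p be a prime, t ≥ 1, and f: Z_p → Z_p a function such that f(a) ≡ f(b) mod p^n whenever a ≡ b mod p^n for some n ≥ t. Then for all n ≥ t and all a ∈ Z_p, and any subset T ⊆ Z/p, we have Σ_{0 ≤ m < p^n, (m mod p) ∉ T} f(a + m) ≡ 0 (mod p^{n-t}). -/
open Finset

/-- If `f : ℤ_p → ℤ_p` satisfies `f(a) ≡ f(b) mod p^n` whenever `a ≡ b mod p^n` with
`n ≥ t`, then for all `n ≥ t`, `a ∈ ℤ_p`, and `T ⊆ ℤ/p`,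
`∑_{0 ≤ m < p^n, (m mod p) ∉ T} f(a + m) ≡ 0 (mod p^(n-t))`. -/
theorem stmt_11 (p : ℕ) [Fact p.Prime] (t : ℕ) (ht : 1 ≤ t) (f : ℤ_[p] → ℤ_[p])
    (hf : ∀ n, t ≤ n → ∀ a b : ℤ_[p], (p : ℤ_[p]) ^ n ∣ a - b →
      (p : ℤ_[p]) ^ n ∣ f a - f b)
    (n : ℕ) (hn : t ≤ n) (a : ℤ_[p]) (T : Set (ZMod p)) [DecidablePred (· ∈ T)] :
    (p : ℤ_[p]) ^ (n - t) ∣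
      ∑ m ∈ (Finset.range (p ^ n)).filter (fun m : ℕ => ¬ ((m : ZMod p) ∈ T)),
        f (a + (m : ℤ_[p])) := by
  induction n, hn using Nat.le_induction with
  | base => simp
  | succ n hn ih =>
    have hn1 : 1 ≤ n := le_trans ht hn
    have hpn : (0:ℕ) < p ^ n := pow_pos (Fact.out : p.Prime).pos n
    have hzero : ((p : ZMod p)) ^ n = 0 := by
      rw [ZMod.natCast_self, zero_pow (by omega : n ≠ 0)]
    set s := (Finset.range (p ^ n)).filter (fun m : ℕ => ¬ ((m : ZMod p) ∈ T)) with hs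
    have key : ∑ m ∈ (Finset.range (p ^ (n+1))).filter (fun m : ℕ => ¬ ((m : ZMod p) ∈ T)),
        f (a + (m : ℤ_[p]))
        = ∑ x ∈ Finset.range p ×ˢ s,
            f (a + (x.2 : ℤ_[p]) + (x.1 : ℤ_[p]) * (p:ℤ_[p]) ^ n) := by
      apply Finset.sum_nbij' (fun m => (m / p ^ n, m % p ^ n))
        (fun x => x.1 * p ^ n + x.2)
      · intro m hm
        simp only [Finset.mem_filter, Finset.mem_range] at hm
        simp only [Finset.mem_product, Finset.mem_range, hs, Finset.mem_filter]
        refine ⟨Nat.div_lt_of_lt_mul (by rw [← pow_succ]; exact hm.1),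
          Nat.mod_lt _ hpn, ?_⟩
        have : ((m % p ^ n : ℕ) : ZMod p) = (m : ZMod p) := by
          conv_rhs => rw [← Nat.mod_add_div m (p ^ n)]
          push_cast [hzero]
          ring
        rw [this]; exact hm.2
      · rintro ⟨i, m⟩ hx
        simp only [Finset.mem_product, Finset.mem_range, hs, Finset.mem_filter] at hx
        simp only [Finset.mem_filter, Finset.mem_range]
        constructor
        · calc i * p ^ n + m < i * p ^ n + p ^ n := by omega
            _ = (i + 1) * p ^ n := by ring
            _ ≤ p * p ^ n := Nat.mul_le_mul_right _ (by omega)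
            _ = p ^ (n + 1) := by ring
        · have : ((i * p ^ n + m : ℕ) : ZMod p) = (m : ZMod p) := by
            push_cast [hzero]; ring
          rw [this]; exact hx.2.2
      · intro m hm
        simp only [Finset.mem_filter, Finset.mem_range] at hm
        simp [Nat.div_add_mod, Nat.mod_add_div, mul_comm]
      · rintro ⟨i, m⟩ hx
        simp only [Finset.mem_product, Finset.mem_range, hs, Finset.mem_filter] at hx
        have h1 : (i * p ^ n + m) / p ^ n = i := by
          rw [mul_comm, Nat.mul_add_div hpn, Nat.div_eq_of_lt hx.2.1, add_zero]
        have h2 : (i * p ^ n + m) % p ^ n = m := by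
          rw [add_comm, Nat.add_mul_mod_self_right, Nat.mod_eq_of_lt hx.2.1]
        simp [h1, h2]
      · intro m hm
        congr 1
        conv_lhs => rw [← Nat.mod_add_div m (p ^ n)]
        push_cast
        ring
    rw [key, Finset.sum_product]
    have heach : ∀ i : ℕ, ∑ m ∈ s, f (a + (m:ℤ_[p]) + (i:ℤ_[p]) * (p:ℤ_[p]) ^ n)
        = (∑ m ∈ s, f (a + (m:ℤ_[p])))
          + ∑ m ∈ s, (f (a + (m:ℤ_[p]) + (i:ℤ_[p]) * (p:ℤ_[p]) ^ n) - f (a + (m:ℤ_[p]))) := by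
      intro i
      rw [← Finset.sum_add_distrib]
      exact Finset.sum_congr rfl fun m _ => by ring
    simp_rw [heach]
    rw [Finset.sum_add_distrib, Finset.sum_const, Finset.card_range]
    apply dvd_add
    · have hexp : n + 1 - t = (n - t) + 1 := by omega
      rw [hexp, pow_succ, nsmul_eq_mul, mul_comm ((p:ℤ_[p]) ^ (n - t))]
      exact mul_dvd_mul dvd_rfl ih
    · refine dvd_trans (pow_dvd_pow _ (show n + 1 - t ≤ n by omega)) ?_
      refine Finset.dvd_sum fun i _ => Finset.dvd_sum fun m _ => ?_
      refine hf n hn _ _ ?_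
      have : (a + (m:ℤ_[p]) + (i:ℤ_[p]) * (p:ℤ_[p]) ^ n) - (a + (m:ℤ_[p]))
          = (i:ℤ_[p]) * (p:ℤ_[p]) ^ n := by ring
      rw [this]
      exact dvd_mul_left _ _
end

section
/- Let N > 1 and h ≥ 1 with gcd(N, h) = 1, let p be a prime with gcd(p, Nh) = 1, and let c be an integer with 1 ≤ c < h (case c < h). Let d be an integer with 0 ≤ d < N. Then the representative in [0, Nh) of (d·h + (c - ((c·h^{-1}) mod N)·h)·p^{-1}) mod Nh equals h·d - N·(((h-c)·(pN)^{-1}) mod h) + N·h·[d < N·(((h-c)(pN)^{-1}) mod h)/h], where [·] is 1 if the condition holds and 0 otherwise, and all inverses and representatives are taken at the indicated moduli with representatives in [0, modulus). -/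
/-- Explicit floor identity (case `c < h`): the representative in `[0, Nh)` of
`(d·h + (c - ((c·h⁻¹) mod N)·h)·p⁻¹) mod Nh` equals
`h·d - N·A + N·h·[h·d < N·A]` where `A = ((h-c)·(pN)⁻¹) mod h`. -/
theorem stmt_13 (N h : ℤ) (hN : 1 < N) (hh : 1 ≤ h) (hcop : IsCoprime N h)
    (p : ℕ) (hp : p.Prime) (hpcop : IsCoprime (p : ℤ) (N * h))
    (c d : ℤ) (hc1 : 1 ≤ c) (hc2 : c < h) (hd0 : 0 ≤ d) (hd : d < N)
    (hinv pinv pNinv : ℤ)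
    (hhinv : h * hinv ≡ 1 [ZMOD N])
    (hpinv : (p : ℤ) * pinv ≡ 1 [ZMOD N * h])
    (hpNinv : (p : ℤ) * N * pNinv ≡ 1 [ZMOD h]) :
    (d * h + (c - ((c * hinv) % N) * h) * pinv) % (N * h)
      = h * d - N * (((h - c) * pNinv) % h)
        + N * h * (if h * d < N * (((h - c) * pNinv) % h) then 1 else 0) := by
  have hhpos : (0:ℤ) < h := by linarith
  have hNpos : (0:ℤ) < N := by linarith
  set A : ℤ := ((h - c) * pNinv) % h with hAdef
  set B : ℤ := (c * hinv) % N with hBdef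
  have hA0 : 0 ≤ A := Int.emod_nonneg _ (by positivity)
  have hA1 : A < h := Int.emod_lt_of_pos _ hhpos
  have hBmod : B ≡ c * hinv [ZMOD N] := Int.emod_emod_of_dvd _ dvd_rfl
  have hAmod : A ≡ (h - c) * pNinv [ZMOD h] := Int.emod_emod_of_dvd _ dvd_rfl
  -- Step 1: c - B*h ≡ -(N*A)*p mod N*h via CRT
  have hcopN : (N.natAbs).Coprime (h.natAbs) := Int.isCoprime_iff_gcd_eq_one.mp hcop
  have hmN : c - B * h ≡ (-(N * A)) * p [ZMOD N] := by
    have e1 : c - B * h ≡ c - (c * hinv) * h [ZMOD N] :=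
      (Int.ModEq.refl c).sub (hBmod.mul_right h)
    have e2 : c - (c * hinv) * h ≡ c - c * 1 [ZMOD N] := by
      have : c * (h * hinv) ≡ c * 1 [ZMOD N] := hhinv.mul_left c
      have : c * hinv * h ≡ c * 1 [ZMOD N] := by
        calc c * hinv * h = c * (h * hinv) := by ring
        _ ≡ c * 1 [ZMOD N] := this
      exact (Int.ModEq.refl c).sub this
    have e3 : (-(N * A)) * p ≡ 0 [ZMOD N] :=
      Int.modEq_zero_iff_dvd.mpr ⟨-(A * p), by ring⟩
    calc c - B * h ≡ c - (c * hinv) * h [ZMOD N] := e1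
      _ ≡ c - c * 1 [ZMOD N] := e2
      _ = 0 := by ring
      _ ≡ (-(N * A)) * p [ZMOD N] := e3.symm
  have hmh : c - B * h ≡ (-(N * A)) * p [ZMOD h] := by
    have e1 : (-(N * A)) * p ≡ (-(N * ((h - c) * pNinv))) * p [ZMOD h] :=
      ((hAmod.mul_left N).neg).mul_right p
    have e2 : (-(N * ((h - c) * pNinv))) * p ≡ (-(h - c)) * 1 [ZMOD h] := by
      calc (-(N * ((h - c) * pNinv))) * p = (-(h - c)) * ((p:ℤ) * N * pNinv) := by ring
        _ ≡ (-(h - c)) * 1 [ZMOD h] := hpNinv.mul_left _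
    have e3 : c - B * h ≡ c - B * 0 [ZMOD h] :=
      (Int.ModEq.refl c).sub (Int.modEq_zero_iff_dvd.mpr dvd_rfl |>.mul_left B)
    calc c - B * h ≡ c - B * 0 [ZMOD h] := e3
      _ = (-(h - c)) * 1 + h := by ring
      _ ≡ (-(h - c)) * 1 + 0 [ZMOD h] :=
        (Int.ModEq.refl _).add (Int.modEq_zero_iff_dvd.mpr dvd_rfl)
      _ = (-(h - c)) * 1 := by ring
      _ ≡ (-(N * ((h - c) * pNinv))) * p [ZMOD h] := e2.symm
      _ ≡ (-(N * A)) * p [ZMOD h] := e1.symm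
  have h1 : c - B * h ≡ (-(N * A)) * p [ZMOD N * h] :=
    (Int.modEq_and_modEq_iff_modEq_mul hcopN).mp ⟨hmN, hmh⟩
  -- Step 2: multiply by pinv
  have h2 : (c - B * h) * pinv ≡ -(N * A) [ZMOD N * h] := by
    calc (c - B * h) * pinv ≡ (-(N * A)) * p * pinv [ZMOD N * h] := h1.mul_right pinv
      _ = (-(N * A)) * ((p:ℤ) * pinv) := by ring
      _ ≡ (-(N * A)) * 1 [ZMOD N * h] := hpinv.mul_left _
      _ = -(N * A) := by ring
  have key : d * h + (c - B * h) * pinv ≡ h * d - N * A [ZMOD N * h] := by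
    calc d * h + (c - B * h) * pinv ≡ d * h + -(N * A) [ZMOD N * h] := h2.add_left _
      _ = h * d - N * A := by ring
  have keyeq : (d * h + (c - B * h) * pinv) % (N * h) = (h * d - N * A) % (N * h) := key
  rw [keyeq]
  by_cases hlt : h * d < N * A
  · rw [if_pos hlt]
    have : (h * d - N * A) % (N * h) = (h * d - N * A + N * h) % (N * h) := by
      rw [show h * d - N * A + N * h = h * d - N * A + N * h * 1 by ring,
        Int.add_mul_emod_self_left]
    rw [this, Int.emod_eq_of_lt (by nlinarith) (by nlinarith)]
    ring
  · rw [if_neg hlt]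
    push_neg at hlt
    rw [Int.emod_eq_of_lt (by nlinarith) (by nlinarith)]
    ring
end

section
/- Let N > 1, h ≥ 1, gcd(N,h)=1, p prime with gcd(p, Nh) = 1, d, c integers with 0 ≤ d < N and 1 ≤ c ≤ h, and set A = N·((h-c)·(pN)^{-1} mod h, representative in [0,h)) and B = (c·p^{-1} mod h, representative in [0,h) if c < h, in (0,h] if c = h). Then h·d - A + N·h·[condition] = h·((d - (A + B)·h^{-1}) mod N, lifted appropriately) + B, where [condition] is the indicator d < (A+B)/h (strict, respectively d ≤ A/h when c = h). Equivalently: for c < h, h·d - A + Nh·[d < (A+B)/h] = h·((d - (A+B)/h)♭_N) + B. -/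
/-- With `A = N·(((h-c)·(pN)⁻¹) mod h)` and `B = (c·p⁻¹) mod h` (case `c < h`):
`h ∣ A + B` and `h·d - A + N·h·[d < (A+B)/h] = h·((d - (A+B)/h) mod N) + B`. -/
theorem stmt_14 (N h : ℤ) (hN : 1 < N) (hh : 1 ≤ h) (hcop : IsCoprime N h)
    (p : ℕ) (hp : p.Prime) (hpcop : IsCoprime (p : ℤ) (N * h))
    (c d : ℤ) (hc1 : 1 ≤ c) (hc2 : c < h) (hd0 : 0 ≤ d) (hd : d < N)
    (pinv pNinv : ℤ)
    (hpinv : (p : ℤ) * pinv ≡ 1 [ZMOD h])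
    (hpNinv : (p : ℤ) * N * pNinv ≡ 1 [ZMOD h]) :
    h ∣ (N * (((h - c) * pNinv) % h) + (c * pinv) % h) ∧
    h * d - N * (((h - c) * pNinv) % h)
      + N * h * (if d < (N * (((h - c) * pNinv) % h) + (c * pinv) % h) / h then 1 else 0)
    = h * ((d - (N * (((h - c) * pNinv) % h) + (c * pinv) % h) / h) % N)
      + (c * pinv) % h := by
  obtain ⟨u, hu⟩ := hpinv.dvd
  obtain ⟨v, hv⟩ := hpNinv.dvd
  set r : ℤ := ((h - c) * pNinv) % h with hr
  set B : ℤ := (c * pinv) % h with hB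
  have hh0 : (0:ℤ) < h := by omega
  have hdvd : h ∣ (N * r + B) := by
    refine ⟨N * pNinv + c * (pinv * v - N * pNinv * u)
      - N * (((h - c) * pNinv) / h) - (c * pinv) / h, ?_⟩
    rw [hr, hB, Int.emod_def, Int.emod_def]
    linear_combination c * pinv * hv - c * N * pNinv * hu
  refine ⟨hdvd, ?_⟩
  obtain ⟨q, hq⟩ := hdvd
  have hdiv : (N * r + B) / h = q := by
    rw [hq]; exact Int.mul_ediv_cancel_left _ (by omega)
  have hr0 : 0 ≤ r := Int.emod_nonneg _ (by omega)
  have hr1 : r < h := Int.emod_lt_of_pos _ hh0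
  have hB0 : 0 ≤ B := Int.emod_nonneg _ (by omega)
  have hB1 : B < h := Int.emod_lt_of_pos _ hh0
  have hq0 : 0 ≤ q := by nlinarith
  have hqN : q ≤ N := by
    have h1 : h * q < h * (N + 1) := by nlinarith
    have := lt_of_mul_lt_mul_left h1 (by omega : (0:ℤ) ≤ h)
    omega
  have hdq : (d - q) % N = if d < q then d - q + N else d - q := by
    split
    · rw [show (d - q) % N = (d - q + N) % N from (Int.add_mul_emod_self_left (a := d - q) (b := N) (c := 1)).symm.trans (by ring_nf)]
      exact Int.emod_eq_of_lt (a := d - q + N) (b := N) (by omega) (by omega)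
    · exact Int.emod_eq_of_lt (a := d - q) (b := N) (by omega) (by omega)
  rw [hdiv, hdq]
  split
  · linear_combination -hq
  · linear_combination -hq
end

section
/- Let N > 1 and k ≥ 1, and let χ be a function on (Z/N)^k-indexed tuples given by a nontrivial character composed with an affine form: χ(d) = ξ(z + d_1 v_1 + ⋯ + d_k v_k) where ξ is a nontrivial character of Z/N extended by zero and v_i are units. Then Σ_{0 ≤ d_1,…,d_k < N} χ(d) · Π_{i=1}^k (d_i - l_i + N·[l_i > d_i]) = Σ_{0 ≤ d < N} χ(d) · Π_{i=1}^k (d_i + N·[l_i > d_i]) for any integers 0 ≤ l_i < N, where [·] is the indicator. -/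
open Finset

section Aux

variable {N k : ℕ}

private lemma aff_sum_zero [NeZero N] (ξ : DirichletCharacter ℂ N) (hξ : ξ ≠ 1)
    (c : ZMod N) (u : (ZMod N)ˣ) : ∑ t : ZMod N, ξ (c + t * u) = 0 := by
  have hbij : Function.Bijective (fun t : ZMod N => c + t * (u : ZMod N)) := by
    constructor
    · intro a b hab
      simp only at hab
      exact u.isUnit.mul_left_injective (add_left_cancel hab)
    · intro y
      refine ⟨(y - c) * (u⁻¹ : (ZMod N)ˣ), ?_⟩
      simp [mul_assoc]
  calc ∑ t : ZMod N, ξ (c + t * u)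
      = ∑ b : ZMod N, ξ b := Fintype.sum_bijective _ hbij _ _ (fun t => rfl)
    _ = 0 := MulChar.sum_eq_zero_of_ne_one hξ

private lemma key_zero [NeZero N] (ξ : DirichletCharacter ℂ N) (hξ : ξ ≠ 1)
    (v : Fin k → (ZMod N)ˣ) (w : ZMod N) (j₀ : Fin k) (g : (Fin k → ZMod N) → ℂ)
    (hg : ∀ a t, g (Function.update a j₀ t) = g a) :
    ∑ a : Fin k → ZMod N, ξ (w + ∑ j, a j * v j) * g a = 0 := by
  classical
  set e := Equiv.piSplitAt j₀ (fun _ : Fin k => ZMod N) with he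
  have hsum : ∑ a : Fin k → ZMod N, ξ (w + ∑ j, a j * v j) * g a
      = ∑ p : ZMod N × ({ j : Fin k // j ≠ j₀ } → ZMod N),
          ξ (w + ∑ j, (e.symm p) j * v j) * g (e.symm p) :=
    (Equiv.sum_comp e.symm (fun a => ξ (w + ∑ j, a j * v j) * g a)).symm
  rw [hsum, Fintype.sum_prod_type_right]
  refine Finset.sum_eq_zero fun r _ => ?_
  have hupdate : ∀ x : ZMod N, e.symm (x, r) = Function.update (e.symm (0, r)) j₀ x := by
    intro x
    funext j
    by_cases hj : j = j₀
    · subst hj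
      simp [he, Equiv.piSplitAt]
    · simp [he, Equiv.piSplitAt, hj]
  have hg' : ∀ x : ZMod N, g (e.symm (x, r)) = g (e.symm (0, r)) := by
    intro x; rw [hupdate x, hg]
  have hsum2 : ∀ x : ZMod N,
      ∑ j, (e.symm (x, r)) j * (v j : ZMod N)
        = x * v j₀ + ∑ j ∈ univ \ {j₀}, (e.symm (0, r)) j * (v j : ZMod N) := by
    intro x
    rw [hupdate x]
    have h1 : (fun j => Function.update (e.symm (0, r)) j₀ x j * (v j : ZMod N))
        = Function.update (fun j => (e.symm (0, r)) j * (v j : ZMod N)) j₀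
            (x * (v j₀ : ZMod N)) := by
      funext j
      exact Function.apply_update (fun j y => y * (v j : ZMod N)) (e.symm (0, r)) j₀ x j
    calc ∑ j, Function.update (e.symm (0, r)) j₀ x j * (v j : ZMod N)
        = ∑ j, Function.update (fun j => (e.symm (0, r)) j * (v j : ZMod N)) j₀
            (x * (v j₀ : ZMod N)) j := by rw [h1]
      _ = x * v j₀ + ∑ j ∈ univ \ {j₀}, (e.symm (0, r)) j * (v j : ZMod N) :=
          Finset.sum_update_of_mem (Finset.mem_univ j₀) _ _
  have hterm : ∀ x : ZMod N, ξ (w + ∑ j, (e.symm (x, r)) j * v j) * g (e.symm (x, r))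
      = ξ ((w + ∑ j ∈ univ \ {j₀}, (e.symm (0, r)) j * (v j : ZMod N)) + x * v j₀)
          * g (e.symm (0, r)) := by
    intro x
    rw [hg' x, hsum2 x]
    ring_nf
  simp only [hterm]
  rw [← Finset.sum_mul, aff_sum_zero ξ hξ, zero_mul]

private lemma sum_piFinset_eq [NeZero N] (H : (Fin k → ZMod N) → ℂ) :
    ∑ d ∈ Fintype.piFinset (fun _ : Fin k => Finset.range N),
        H (fun j => ((d j : ℕ) : ZMod N))
      = ∑ a : Fin k → ZMod N, H a := by
  classical
  refine Finset.sum_nbij' (fun d => fun j => ((d j : ℕ) : ZMod N))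
    (fun a => fun j => (a j).val) ?_ ?_ ?_ ?_ ?_
  · intro d _; exact Finset.mem_univ _
  · intro a _
    simp only [Fintype.mem_piFinset, Finset.mem_range]
    exact fun j => ZMod.val_lt _
  · intro d hd
    simp only [Fintype.mem_piFinset, Finset.mem_range] at hd
    funext j
    exact ZMod.val_cast_of_lt (hd j)
  · intro a _
    funext j
    exact ZMod.natCast_rightInverse _
  · intro d _; rfl

end Aux

/-- For a nontrivial Dirichlet character `ξ` mod `N` (extended by zero), units `v_i`,
and `0 ≤ l_i < N`:
`∑_d ξ(z + ∑ d_j v_j) ∏_i (d_i - l_i + N·[l_i > d_i])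
  = ∑_d ξ(z + ∑ d_j v_j) ∏_i (d_i + N·[l_i > d_i])`,
the sums ranging over `d ∈ [0,N)^k`. -/
theorem stmt_16 (N k : ℕ) (hN : 1 < N) (hk : 1 ≤ k) (ξ : DirichletCharacter ℂ N)
    (hξ : ξ ≠ 1) (v : Fin k → (ZMod N)ˣ) (z : ZMod N) (l : Fin k → ℕ)
    (hl : ∀ i, l i < N) :
    ∑ d ∈ Fintype.piFinset (fun _ : Fin k => Finset.range N),
        ξ (z + ∑ j, (d j : ZMod N) * (v j : ZMod N))
          * ∏ i, ((d i : ℂ) - (l i : ℂ) + N * if l i > d i then 1 else 0)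
    = ∑ d ∈ Fintype.piFinset (fun _ : Fin k => Finset.range N),
        ξ (z + ∑ j, (d j : ZMod N) * (v j : ZMod N))
          * ∏ i, ((d i : ℂ) + N * if l i > d i then 1 else 0) := by
  classical
  haveI : NeZero N := ⟨by omega⟩
  set S := Fintype.piFinset (fun _ : Fin k => Finset.range N) with hS
  set σ : (Fin k → ℕ) → (Fin k → ℕ) := fun d i => (d i + l i) % N with hσ
  set τ : (Fin k → ℕ) → (Fin k → ℕ) := fun d i => (d i + (N - l i)) % N with hτ
  have hσS : ∀ d ∈ S, σ d ∈ S := by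
    intro d _
    simp only [hS, Fintype.mem_piFinset, Finset.mem_range, hσ]
    exact fun i => Nat.mod_lt _ (by omega)
  have hτS : ∀ d ∈ S, τ d ∈ S := by
    intro d _
    simp only [hS, Fintype.mem_piFinset, Finset.mem_range, hτ]
    exact fun i => Nat.mod_lt _ (by omega)
  have hmemS : ∀ d ∈ S, ∀ i, d i < N := by
    intro d hd
    simpa only [hS, Fintype.mem_piFinset, Finset.mem_range] using hd
  have hτσ : ∀ d ∈ S, τ (σ d) = d := by
    intro d hd
    funext i
    have hdi := hmemS d hd i
    have hli := hl i
    show ((d i + l i) % N + (N - l i)) % N = d i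
    rw [Nat.mod_add_mod]
    have h : d i + l i + (N - l i) = d i + N := by omega
    rw [h, Nat.add_mod_right, Nat.mod_eq_of_lt hdi]
  have hστ : ∀ d ∈ S, σ (τ d) = d := by
    intro d hd
    funext i
    have hdi := hmemS d hd i
    have hli := hl i
    show ((d i + (N - l i)) % N + l i) % N = d i
    rw [Nat.mod_add_mod]
    have h : d i + (N - l i) + l i = d i + N := by omega
    rw [h, Nat.add_mod_right, Nat.mod_eq_of_lt hdi]
  have hmod : ∀ (a b : ℕ), a < N → b < N →
      (a + b) % N = if a + b < N then a + b else a + b - N := by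
    intro a b ha hb
    split_ifs with h
    · exact Nat.mod_eq_of_lt h
    · rw [Nat.mod_eq_sub_mod (by omega), Nat.mod_eq_of_lt (by omega)]
  -- the character value at σ d
  have hχ : ∀ d : Fin k → ℕ,
      (z + ∑ j, ((σ d j : ℕ) : ZMod N) * (v j : ZMod N))
        = z + ∑ j, (((d j + l j : ℕ) : ZMod N)) * (v j : ZMod N) := by
    intro d
    congr 1
    refine Finset.sum_congr rfl fun j _ => ?_
    congr 1
    exact ZMod.natCast_mod _ _
  -- factor computations
  have hfacA : ∀ d ∈ S, ∀ i : Fin k,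
      ((σ d i : ℂ) - (l i : ℂ) + N * if l i > σ d i then 1 else 0) = (d i : ℂ) := by
    intro d hd i
    have hdi := hmemS d hd i
    have hli := hl i
    have hm := hmod (d i) (l i) hdi hli
    show (((d i + l i) % N : ℕ) : ℂ) - (l i : ℂ)
        + N * (if l i > (d i + l i) % N then 1 else 0) = (d i : ℂ)
    by_cases h : d i + l i < N
    · rw [hm, if_pos h]
      rw [if_neg (by omega)]
      push_cast
      ring
    · rw [hm, if_neg h]
      rw [if_pos (by omega)]
      rw [Nat.cast_sub (by omega)]
      push_cast
      ring
  have hfacB : ∀ d ∈ S, ∀ i : Fin k,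
      ((σ d i : ℂ) + N * if l i > σ d i then 1 else 0) = (d i : ℂ) + (l i : ℂ) := by
    intro d hd i
    have hdi := hmemS d hd i
    have hli := hl i
    have hm := hmod (d i) (l i) hdi hli
    show (((d i + l i) % N : ℕ) : ℂ)
        + N * (if l i > (d i + l i) % N then 1 else 0) = (d i : ℂ) + (l i : ℂ)
    by_cases h : d i + l i < N
    · rw [hm, if_pos h]
      rw [if_neg (by omega)]
      push_cast
      ring
    · rw [hm, if_neg h]
      rw [if_pos (by omega)]
      rw [Nat.cast_sub (by omega)]
      push_cast
      ring
  -- Claim A : LHS = M1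
  have claimA :
      ∑ d ∈ S, ξ (z + ∑ j, (d j : ZMod N) * (v j : ZMod N))
          * ∏ i, ((d i : ℂ) - (l i : ℂ) + N * if l i > d i then 1 else 0)
      = ∑ d ∈ S, ξ (z + ∑ j, (((d j + l j : ℕ)) : ZMod N) * (v j : ZMod N))
          * ∏ i, (d i : ℂ) := by
    refine (Finset.sum_nbij' σ τ hσS hτS hτσ hστ ?_).symm
    intro d hd
    rw [← hχ d]
    congr 1
    refine (Finset.prod_congr rfl fun i _ => ?_).symm
    exact hfacA d hd i
  -- Claim B : RHS = M2
  have claimB :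
      ∑ d ∈ S, ξ (z + ∑ j, (d j : ZMod N) * (v j : ZMod N))
          * ∏ i, ((d i : ℂ) + N * if l i > d i then 1 else 0)
      = ∑ d ∈ S, ξ (z + ∑ j, (((d j + l j : ℕ)) : ZMod N) * (v j : ZMod N))
          * ∏ i, ((d i : ℂ) + (l i : ℂ)) := by
    refine (Finset.sum_nbij' σ τ hσS hτS hτσ hστ ?_).symm
    intro d hd
    rw [← hχ d]
    congr 1
    refine (Finset.prod_congr rfl fun i _ => ?_).symm
    exact hfacB d hd i
  rw [claimA, claimB]
  -- reindex both sums over all of `Fin k → ZMod N`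
  set w : ZMod N := z + ∑ j, (l j : ZMod N) * (v j : ZMod N) with hw
  have hshift : ∀ a : Fin k → ZMod N,
      z + ∑ j, (a j + (l j : ZMod N)) * (v j : ZMod N) = w + ∑ j, a j * (v j : ZMod N) := by
    intro a
    simp only [hw, add_mul, Finset.sum_add_distrib]
    ring
  have hM1 :
      ∑ d ∈ S, ξ (z + ∑ j, (((d j + l j : ℕ)) : ZMod N) * (v j : ZMod N))
          * ∏ i, (d i : ℂ)
      = ∑ a : Fin k → ZMod N, ξ (w + ∑ j, a j * (v j : ZMod N))
          * ∏ i, (((a i).val : ℕ) : ℂ) := by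
    rw [← sum_piFinset_eq (fun a => ξ (w + ∑ j, a j * (v j : ZMod N))
        * ∏ i, (((a i).val : ℕ) : ℂ))]
    refine Finset.sum_congr rfl fun d hd => ?_
    have h1 : ∀ j, (((d j + l j : ℕ)) : ZMod N) = ((d j : ℕ) : ZMod N) + (l j : ZMod N) := by
      intro j; push_cast; ring
    have h2 : ∀ i, (((((d i : ℕ) : ZMod N)).val : ℕ) : ℂ) = ((d i : ℕ) : ℂ) := by
      intro i
      rw [ZMod.val_cast_of_lt (hmemS d hd i)]
    simp only [h1, hshift, h2]
  have hM2 :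
      ∑ d ∈ S, ξ (z + ∑ j, (((d j + l j : ℕ)) : ZMod N) * (v j : ZMod N))
          * ∏ i, ((d i : ℂ) + (l i : ℂ))
      = ∑ a : Fin k → ZMod N, ξ (w + ∑ j, a j * (v j : ZMod N))
          * ∏ i, ((((a i).val : ℕ) : ℂ) + (l i : ℂ)) := by
    rw [← sum_piFinset_eq (fun a => ξ (w + ∑ j, a j * (v j : ZMod N))
        * ∏ i, ((((a i).val : ℕ) : ℂ) + (l i : ℂ)))]
    refine Finset.sum_congr rfl fun d hd => ?_
    have h1 : ∀ j, (((d j + l j : ℕ)) : ZMod N) = ((d j : ℕ) : ZMod N) + (l j : ZMod N) := by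
      intro j; push_cast; ring
    have h2 : ∀ i, (((((d i : ℕ) : ZMod N)).val : ℕ) : ℂ) = ((d i : ℕ) : ℂ) := by
      intro i
      rw [ZMod.val_cast_of_lt (hmemS d hd i)]
    simp only [h1, hshift, h2]
  rw [hM1, hM2]
  -- expand the product on the right
  have hexp : ∀ a : Fin k → ZMod N,
      ∏ i, ((((a i).val : ℕ) : ℂ) + (l i : ℂ))
        = ∑ t ∈ (univ : Finset (Fin k)).powerset,
            (∏ i ∈ t, (((a i).val : ℕ) : ℂ)) * ∏ i ∈ univ \ t, (l i : ℂ) :=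
    fun a => Finset.prod_add _ _ _
  simp only [hexp, Finset.mul_sum]
  rw [Finset.sum_comm]
  have huniv : (univ : Finset (Fin k)) ∈ (univ : Finset (Fin k)).powerset :=
    Finset.mem_powerset_self _
  rw [← Finset.add_sum_erase _ _ huniv]
  have hzero : ∀ t ∈ ((univ : Finset (Fin k)).powerset).erase univ,
      ∑ a : Fin k → ZMod N, ξ (w + ∑ j, a j * (v j : ZMod N))
        * ((∏ i ∈ t, (((a i).val : ℕ) : ℂ)) * ∏ i ∈ univ \ t, (l i : ℂ)) = 0 := by
    intro t ht
    have htne : t ≠ univ := (Finset.mem_erase.mp ht).1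
    obtain ⟨j₀, hj₀⟩ : ∃ j₀, j₀ ∉ t := by
      by_contra hcon
      push_neg at hcon
      exact htne (Finset.eq_univ_iff_forall.mpr hcon)
    refine key_zero ξ hξ v w j₀
      (fun a => (∏ i ∈ t, (((a i).val : ℕ) : ℂ)) * ∏ i ∈ univ \ t, (l i : ℂ)) ?_
    intro a x
    congr 1
    refine Finset.prod_congr rfl fun i hi => ?_
    have hij : i ≠ j₀ := fun h => hj₀ (h ▸ hi)
    rw [Function.update_of_ne hij]
  rw [Finset.sum_eq_zero hzero, add_zero]
  simp
end
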